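/- arXiv:math/9201289 — 5 statements merged into one kernel-verified Lean document; each statement's English description precedes it below -/
import Mathlib

section
/- Let f : [0,1] → [0,1] be continuous, let [a,b] and [c,d] be closed subintervals with f([a,b]) ⊇ [c,d], and suppose I_0, I_1, …, I_k are closed subintervals of [c,d] with pairwise disjoint interiors such that I_{i+1} lies to the right of I_i for all i. If moreover f(a) ≤ c and f(b) ≥ d, then there exist closed subintervals J_0, J_1, …, J_k of [a,b] with pairwise disjoint interiors such that J_{i+1} lies to the right of J_i and f(J_i) = I_i for each 0 ≤ i ≤ k. -/
open Set

/-- Pullback of a single interval, with control of the endpoints. -/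
lemma aux_pull (f : ℝ → ℝ) (s b p q : ℝ) (hsb : s ≤ b)
    (hf : ContinuousOn f (Icc s b)) (hpq : p ≤ q) (hfs : f s ≤ p) (hfb : q ≤ f b) :
    ∃ u v, s ≤ u ∧ u ≤ v ∧ v ≤ b ∧ f u = p ∧ f v = q ∧
      f '' Icc u v = Icc p q := by
  -- first hit of q
  set S : Set ℝ := Icc s b ∩ f ⁻¹' {q} with hSdef
  have hSclosed : IsClosed S := hf.preimage_isClosed_of_isClosed isClosed_Icc isClosed_singleton
  have hSne : S.Nonempty := by
    obtain ⟨x, hx, hfx⟩ := intermediate_value_Icc hsb hf ⟨hfs.trans hpq, hfb⟩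
    exact ⟨x, hx, hfx⟩
  have hSbdd : BddBelow S := ⟨s, fun x hx => hx.1.1⟩
  set v := sInf S with hvdef
  have hvS : v ∈ S := hSclosed.csInf_mem hSne hSbdd
  have hsv : s ≤ v := hvS.1.1
  have hvb : v ≤ b := hvS.1.2
  have hfv : f v = q := hvS.2
  have hle_q : ∀ x ∈ Icc s v, f x ≤ q := by
    intro x hx
    by_contra h
    push_neg at h
    have hxb : Icc s x ⊆ Icc s b := Icc_subset_Icc le_rfl (hx.2.trans hvb)
    obtain ⟨y, hy, hfy⟩ := intermediate_value_Icc hx.1 (hf.mono hxb) ⟨hfs.trans hpq, h.le⟩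
    have hyS : y ∈ S := ⟨⟨hy.1, hy.2.trans (hx.2.trans hvb)⟩, hfy⟩
    have : v ≤ y := csInf_le hSbdd hyS
    have hxv : x = v := le_antisymm hx.2 (this.trans hy.2)
    rw [hxv, hfv] at h
    exact lt_irrefl q h
  -- last hit of p before v
  set T : Set ℝ := Icc s v ∩ f ⁻¹' {p} with hTdef
  have hTclosed : IsClosed T :=
    (hf.mono (Icc_subset_Icc le_rfl hvb)).preimage_isClosed_of_isClosed isClosed_Icc
      isClosed_singleton
  have hTne : T.Nonempty := by
    obtain ⟨x, hx, hfx⟩ := intermediate_value_Icc hsv (hf.mono (Icc_subset_Icc le_rfl hvb))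
      ⟨hfs, by rw [hfv]; exact hpq⟩
    exact ⟨x, hx, hfx⟩
  have hTbdd : BddAbove T := ⟨v, fun x hx => hx.1.2⟩
  set u := sSup T with hudef
  have huT : u ∈ T := hTclosed.csSup_mem hTne hTbdd
  have hsu : s ≤ u := huT.1.1
  have huv : u ≤ v := huT.1.2
  have hfu : f u = p := huT.2
  have hge_p : ∀ x ∈ Icc u v, p ≤ f x := by
    intro x hx
    by_contra h
    push_neg at h
    have hxsub : Icc x v ⊆ Icc s b := Icc_subset_Icc (hsu.trans hx.1) hvb
    obtain ⟨y, hy, hfy⟩ := intermediate_value_Icc hx.2 (hf.mono hxsub)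
      ⟨h.le, by rw [hfv]; exact hpq⟩
    have hyT : y ∈ T := ⟨⟨hsu.trans (hx.1.trans hy.1), hy.2⟩, hfy⟩
    have : y ≤ u := le_csSup hTbdd hyT
    have hxu : x = u := le_antisymm (hy.1.trans this) hx.1
    rw [hxu, hfu] at h
    exact lt_irrefl p h
  refine ⟨u, v, hsu, huv, hvb, hfu, hfv, ?_⟩
  apply Subset.antisymm
  · rintro _ ⟨x, hx, rfl⟩
    exact ⟨hge_p x hx, hle_q x ⟨hsu.trans hx.1, hx.2⟩⟩
  · have := intermediate_value_Icc huv (hf.mono (Icc_subset_Icc hsu hvb))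
    rw [hfu, hfv] at this
    exact this

/-- Lemma 1 of the paper, interval version: pulling back an ordered family of
subintervals of `[c,d]` with pairwise disjoint interiors to an ordered family of
subintervals of `[a,b]` with pairwise disjoint interiors mapping exactly onto them. -/
theorem stmt0 (f : ℝ → ℝ) (a b c d : ℝ) (k : ℕ) (p q : ℕ → ℝ)
    (hf : ContinuousOn f (Icc 0 1)) (hmaps : MapsTo f (Icc 0 1) (Icc 0 1))
    (hab : a ≤ b) (hcd : c ≤ d)
    (habsub : Icc a b ⊆ Icc 0 1) (hcdsub : Icc c d ⊆ Icc 0 1)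
    (hcover : Icc c d ⊆ f '' Icc a b)
    (hI : ∀ i ≤ k, p i ≤ q i ∧ Icc (p i) (q i) ⊆ Icc c d)
    (hdisj : ∀ i ≤ k, ∀ j ≤ k, i ≠ j →
      interior (Icc (p i) (q i)) ∩ interior (Icc (p j) (q j)) = ∅)
    (horder : ∀ i, i < k → ∀ x ∈ Icc (p i) (q i), ∀ y ∈ Icc (p (i+1)) (q (i+1)), x ≤ y)
    (hfa : f a ≤ c) (hfb : d ≤ f b) :
    ∃ u v : ℕ → ℝ,
      (∀ i ≤ k, u i ≤ v i ∧ Icc (u i) (v i) ⊆ Icc a b ∧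
        f '' Icc (u i) (v i) = Icc (p i) (q i)) ∧
      (∀ i ≤ k, ∀ j ≤ k, i ≠ j →
        interior (Icc (u i) (v i)) ∩ interior (Icc (u j) (v j)) = ∅) ∧
      (∀ i, i < k → ∀ x ∈ Icc (u i) (v i), ∀ y ∈ Icc (u (i+1)) (v (i+1)), x ≤ y) := by
  have hfab : ContinuousOn f (Icc a b) := hf.mono habsub
  have hpmem : ∀ i ≤ k, p i ∈ Icc c d := fun i hi =>
    (hI i hi).2 ⟨le_rfl, (hI i hi).1⟩
  have hqmem : ∀ i ≤ k, q i ∈ Icc c d := fun i hi =>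
    (hI i hi).2 ⟨(hI i hi).1, le_rfl⟩
  have hqp : ∀ i, i < k → q i ≤ p (i+1) := by
    intro i hi
    exact horder i hi (q i) ⟨(hI i hi.le).1, le_rfl⟩ (p (i+1))
      ⟨le_rfl, (hI (i+1) hi).1⟩
  -- inductive construction
  have key : ∀ n, n ≤ k → ∃ u v : ℕ → ℝ,
      (∀ i ≤ n, a ≤ u i ∧ u i ≤ v i ∧ v i ≤ b ∧
        f '' Icc (u i) (v i) = Icc (p i) (q i)) ∧
      (∀ i, i < n → v i ≤ u (i+1)) ∧ f (v n) = q n := by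
    intro n
    induction n with
    | zero =>
      intro hk
      obtain ⟨u0, v0, h1, h2, h3, h4, h5, h6⟩ := aux_pull f a b (p 0) (q 0) hab hfab
        (hI 0 hk).1 (hfa.trans (hpmem 0 hk).1) ((hqmem 0 hk).2.trans hfb)
      refine ⟨fun _ => u0, fun _ => v0, ?_, fun i hi => absurd hi (Nat.not_lt_zero i), h5⟩
      intro i hi
      have hi0 := Nat.le_zero.mp hi
      subst hi0
      exact ⟨h1, h2, h3, h6⟩
    | succ n ih =>
      intro hk
      obtain ⟨u, v, hprops, hchain, hfvn⟩ := ih (Nat.le_of_succ_le hk)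
      have hn := hprops n le_rfl
      have hvnb : v n ≤ b := hn.2.2.1
      have havn : a ≤ v n := hn.1.trans hn.2.1
      have hsub : Icc (v n) b ⊆ Icc a b := Icc_subset_Icc havn le_rfl
      have hfs : f (v n) ≤ p (n+1) := by
        rw [hfvn]; exact hqp n (Nat.lt_of_succ_le hk)
      obtain ⟨u', v', h1, h2, h3, h4, h5, h6⟩ := aux_pull f (v n) b (p (n+1)) (q (n+1))
        hvnb (hfab.mono hsub) (hI (n+1) hk).1 hfs ((hqmem (n+1) hk).2.trans hfb)
      refine ⟨fun i => if i ≤ n then u i else u', fun i => if i ≤ n then v i else v', ?_, ?_, ?_⟩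
      · intro i hi
        rcases Nat.lt_succ_iff_lt_or_eq.mp (Nat.lt_succ_of_le hi) with h | h
        · have hi' : i ≤ n := Nat.lt_succ_iff.mp h
          simp only [if_pos hi']
          exact hprops i hi'
        · subst h
          simp only [Nat.not_succ_le_self, if_neg]
          exact ⟨havn.trans h1, h2, h3, h6⟩
      · intro i hi
        rcases Nat.lt_succ_iff_lt_or_eq.mp hi with h | h
        · have hi1 : i ≤ n := Nat.lt_succ_iff.mp (Nat.lt_succ_of_lt h)
          have hi2 : i + 1 ≤ n := h
          simp only [if_pos hi1, if_pos hi2]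
          exact hchain i h
        · subst h
          simp only [if_pos (le_refl i), Nat.not_succ_le_self, if_neg]
          exact h1
      · simp only [Nat.not_succ_le_self, if_neg]
        exact h5
  obtain ⟨u, v, hprops, hchain, _⟩ := key k le_rfl
  -- monotonicity of the chain
  have hmono : ∀ j ≤ k, ∀ i < j, v i ≤ u j := by
    intro j
    induction j with
    | zero => intro _ i hi; exact absurd hi (Nat.not_lt_zero i)
    | succ j ihj =>
      intro hjk i hi
      rcases Nat.lt_succ_iff_lt_or_eq.mp hi with h | h
      · have h1 : v i ≤ u j := ihj (Nat.le_of_succ_le hjk) i h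
        have h2 : u j ≤ v j := (hprops j (Nat.le_of_succ_le hjk)).2.1
        exact h1.trans (h2.trans (hchain j (Nat.lt_of_succ_le hjk)))
      · subst h
        exact hchain i (Nat.lt_of_succ_le hjk)
  refine ⟨u, v, ?_, ?_, ?_⟩
  · intro i hi
    obtain ⟨h1, h2, h3, h4⟩ := hprops i hi
    exact ⟨h2, Icc_subset_Icc h1 h3, h4⟩
  · intro i hi j hj hij
    rw [interior_Icc, interior_Icc]
    rcases hij.lt_or_gt with h | h
    · apply eq_empty_iff_forall_notMem.mpr
      rintro x ⟨hx1, hx2⟩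
      exact lt_irrefl x (lt_trans (lt_of_lt_of_le hx1.2 (hmono j hj i h)) hx2.1)
    · apply eq_empty_iff_forall_notMem.mpr
      rintro x ⟨hx1, hx2⟩
      exact lt_irrefl x (lt_trans (lt_of_lt_of_le hx2.2 (hmono i hi j h)) hx1.1)
  · intro i hi x hx y hy
    exact hx.2.trans ((hchain i hi).trans hy.1)
end

section
/- Let g : [0,1] → [0,1] be continuous and let L_0, L_1, …, L_M be closed subintervals of [0,1] with pairwise disjoint interiors, ordered from left to right, such that g restricted to each L_i is such that the images g(L_0), …, g(L_M) are closed intervals with pairwise disjoint interiors, also ordered from left to right, whose union is all of [0,1]. Then there exists an index i and a point z ∈ L_i with g(z) = z. -/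
open Set

/-- Step 2 in the proof of Lemma 2: a family of intervals in `[0,1]`, ordered left to
right with pairwise disjoint interiors, whose images under `g` are intervals tiling
`[0,1]` in the same order, forces a fixed point of `g` in one of the intervals. -/
theorem stmt1 (g : unitInterval → unitInterval) (hg : Continuous g) (M : ℕ)
    (u v U V : ℕ → unitInterval)
    (hL : ∀ i ≤ M, u i ≤ v i)
    (hdisj : ∀ i ≤ M, ∀ j ≤ M, i ≠ j →
      interior (Icc (u i) (v i)) ∩ interior (Icc (u j) (v j)) = ∅)
    (horder : ∀ i, i < M → ∀ x ∈ Icc (u i) (v i), ∀ y ∈ Icc (u (i+1)) (v (i+1)), x ≤ y)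
    (himg : ∀ i ≤ M, g '' Icc (u i) (v i) = Icc (U i) (V i))
    (himgdisj : ∀ i ≤ M, ∀ j ≤ M, i ≠ j →
      interior (Icc (U i) (V i)) ∩ interior (Icc (U j) (V j)) = ∅)
    (himgorder : ∀ i, i < M → ∀ x ∈ Icc (U i) (V i), ∀ y ∈ Icc (U (i+1)) (V (i+1)), x ≤ y)
    (hcover : ⋃ i ∈ Iic M, Icc (U i) (V i) = univ) :
    ∃ i ≤ M, ∃ z ∈ Icc (u i) (v i), g z = z := by
  by_contra hcon
  push_neg at hcon
  -- images are nonempty intervals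
  have hne : ∀ i ≤ M, U i ≤ V i := by
    intro i hi
    have h : (Icc (U i) (V i)).Nonempty := by
      rw [← himg i hi]
      exact ⟨g (u i), mem_image_of_mem _ ⟨le_refl _, hL i hi⟩⟩
    exact nonempty_Icc.mp h
  -- points attaining the endpoints of each image
  have ha : ∀ i ≤ M, ∃ a ∈ Icc (u i) (v i), g a = U i := by
    intro i hi
    have h : U i ∈ Icc (U i) (V i) := ⟨le_refl _, hne i hi⟩
    rw [← himg i hi] at h
    obtain ⟨a, haL, hag⟩ := h
    exact ⟨a, haL, hag⟩
  have hb : ∀ i ≤ M, ∃ b ∈ Icc (u i) (v i), g b = V i := by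
    intro i hi
    have h : V i ∈ Icc (U i) (V i) := ⟨hne i hi, le_refl _⟩
    rw [← himg i hi] at h
    obtain ⟨b, hbL, hbg⟩ := h
    exact ⟨b, hbL, hbg⟩
  -- chained order of the images
  have chain : ∀ k, k ≤ M → ∀ j, j < k → ∀ x ∈ Icc (U j) (V j), ∀ y ∈ Icc (U k) (V k),
      x ≤ y := by
    intro k
    induction k with
    | zero => intro _ j hj; exact absurd hj (Nat.not_lt_zero j)
    | succ k ih =>
      intro hk j hj x hx y hy
      rcases Nat.lt_succ_iff_lt_or_eq.mp hj with h | rfl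
      · have hUk : U k ∈ Icc (U k) (V k) := ⟨le_refl _, hne k (by omega)⟩
        exact le_trans (ih (by omega) j h x hx (U k) hUk)
          (himgorder k (by omega) (U k) hUk y hy)
      · exact himgorder j (by omega) x hx y hy
  -- adjacency of the images
  have hadj : ∀ i, i < M → U (i+1) ≤ V i := by
    intro i hiM
    by_contra hlt
    push_neg at hlt
    have hltr : (V i : ℝ) < (U (i+1) : ℝ) := hlt
    have hmem : ((V i : ℝ) + (U (i+1) : ℝ)) / 2 ∈ Icc (0:ℝ) 1 := by
      constructor
      · have := (V i).2.1; have := (U (i+1)).2.1; linarith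
      · have := (V i).2.2; have := (U (i+1)).2.2; linarith
    set t : unitInterval := ⟨((V i : ℝ) + (U (i+1) : ℝ)) / 2, hmem⟩ with ht
    have htl : (V i : ℝ) < (t : ℝ) := by rw [ht]; dsimp; linarith
    have htr : (t : ℝ) < (U (i+1) : ℝ) := by rw [ht]; dsimp; linarith
    have hmem2 : t ∈ ⋃ j ∈ Iic M, Icc (U j) (V j) := by rw [hcover]; trivial
    simp only [mem_iUnion, mem_Iic, exists_prop] at hmem2
    obtain ⟨j, hjM, htj⟩ := hmem2
    rcases le_or_gt j i with hji | hij
    · have hVi : V i ∈ Icc (U i) (V i) := ⟨hne i (le_of_lt hiM), le_refl _⟩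
      have hle : t ≤ V i := by
        rcases eq_or_lt_of_le hji with rfl | h
        · exact htj.2
        · exact chain i (le_of_lt hiM) j h t htj (V i) hVi
      exact absurd htl (not_lt.mpr hle)
    · have hU : U (i+1) ∈ Icc (U (i+1)) (V (i+1)) := ⟨le_refl _, hne (i+1) (by omega)⟩
      have hle : U (i+1) ≤ t := by
        rcases eq_or_lt_of_le (Nat.succ_le_of_lt hij) with h | h
        · rw [← h] at htj; exact htj.1
        · exact chain j hjM (i+1) h (U (i+1)) hU t htj
      exact absurd htr (not_lt.mpr hle)
  -- U 0 = 0
  have hU0 : U 0 = 0 := by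
    have h0 : (0 : unitInterval) ∈ ⋃ j ∈ Iic M, Icc (U j) (V j) := by rw [hcover]; trivial
    simp only [mem_iUnion, mem_Iic, exists_prop] at h0
    obtain ⟨j, hjM, h0j⟩ := h0
    have hle : U 0 ≤ (0 : unitInterval) := by
      rcases Nat.eq_zero_or_pos j with rfl | hj
      · exact h0j.1
      · exact chain j hjM 0 hj (U 0) ⟨le_refl _, hne 0 (Nat.zero_le M)⟩ 0 h0j
    exact le_antisymm hle (unitInterval.nonneg' )
  -- V M = 1
  have hVM : V M = 1 := by
    have h1 : (1 : unitInterval) ∈ ⋃ j ∈ Iic M, Icc (U j) (V j) := by rw [hcover]; trivial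
    simp only [mem_iUnion, mem_Iic, exists_prop] at h1
    obtain ⟨j, hjM, h1j⟩ := h1
    have hle : (1 : unitInterval) ≤ V M := by
      rcases eq_or_lt_of_le hjM with rfl | hj
      · exact h1j.2
      · exact chain M (le_refl M) j hj 1 h1j (V M) ⟨hne M (le_refl M), le_refl _⟩
    exact le_antisymm unitInterval.le_one' hle
  -- IVT helper
  have hfix : ∀ i ≤ M, ∀ a ∈ Icc (u i) (v i), ∀ b ∈ Icc (u i) (v i),
      (g a : ℝ) ≤ (a : ℝ) → (b : ℝ) ≤ (g b : ℝ) → False := by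
    intro i hi a haI b hbI hga hgb
    set p : ℝ → unitInterval := Set.projIcc 0 1 zero_le_one with hp
    have hpc : Continuous p := continuous_projIcc
    set F : ℝ → ℝ := fun x => (g (p x) : ℝ) - (p x : ℝ) with hF
    have hcont : Continuous F :=
      ((continuous_subtype_val.comp hg).comp hpc).sub (continuous_subtype_val.comp hpc)
    have hpa : p (a : ℝ) = a := by
      rw [hp, Set.projIcc_of_mem zero_le_one a.2]
    have hpb : p (b : ℝ) = b := by
      rw [hp, Set.projIcc_of_mem zero_le_one b.2]
    have hFa : F (a : ℝ) = (g a : ℝ) - (a : ℝ) := by rw [hF]; dsimp; rw [hpa]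
    have hFb : F (b : ℝ) = (g b : ℝ) - (b : ℝ) := by rw [hF]; dsimp; rw [hpb]
    have h0 : (0 : ℝ) ∈ uIcc (F (a : ℝ)) (F (b : ℝ)) := by
      rw [mem_uIcc, hFa, hFb]
      exact Or.inl ⟨by linarith, by linarith⟩
    obtain ⟨z, hz, hz0⟩ := intermediate_value_uIcc hcont.continuousOn h0
    have hzuv : z ∈ Icc ((u i : ℝ)) ((v i : ℝ)) := by
      have haR : (a : ℝ) ∈ Icc ((u i : ℝ)) ((v i : ℝ)) :=
        ⟨Subtype.coe_le_coe.mpr haI.1, Subtype.coe_le_coe.mpr haI.2⟩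
      have hbR : (b : ℝ) ∈ Icc ((u i : ℝ)) ((v i : ℝ)) :=
        ⟨Subtype.coe_le_coe.mpr hbI.1, Subtype.coe_le_coe.mpr hbI.2⟩
      have hsub : uIcc ((a : ℝ)) ((b : ℝ)) ⊆ Icc ((u i : ℝ)) ((v i : ℝ)) :=
        ordConnected_Icc.uIcc_subset haR hbR
      exact hsub hz
    have hz01 : z ∈ Icc (0:ℝ) 1 := ⟨le_trans (u i).2.1 hzuv.1, le_trans hzuv.2 (v i).2.2⟩
    have hpz : (p z : ℝ) = z := by
      rw [hp, Set.projIcc_of_mem zero_le_one hz01]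
    have hzI : p z ∈ Icc (u i) (v i) := by
      constructor
      · show (u i : ℝ) ≤ (p z : ℝ); rw [hpz]; exact hzuv.1
      · show (p z : ℝ) ≤ (v i : ℝ); rw [hpz]; exact hzuv.2
    have : F z = (g (p z) : ℝ) - (p z : ℝ) := rfl
    exact hcon i hi (p z) hzI (Subtype.coe_injective (by rw [this] at hz0; linarith))
  -- main induction: g z < z on each L_i
  have main : ∀ i, i ≤ M → ∀ z ∈ Icc (u i) (v i), (g z : ℝ) < (z : ℝ) := by
    intro i
    induction i with
    | zero =>
      intro _ z hz
      by_contra hge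
      push_neg at hge
      obtain ⟨a, haI, hga⟩ := ha 0 (Nat.zero_le M)
      have hga' : (g a : ℝ) ≤ (a : ℝ) := by
        rw [hga, hU0]
        exact a.2.1
      exact hfix 0 (Nat.zero_le M) a haI z hz hga' hge
    | succ i ih =>
      intro hiM z hz
      by_contra hge
      push_neg at hge
      obtain ⟨a, haI, hga⟩ := ha (i+1) hiM
      obtain ⟨b, hbI, hgb⟩ := hb i (by omega)
      have h1 : (g b : ℝ) < (b : ℝ) := ih (by omega) b hbI
      have h2 : (U (i+1) : ℝ) ≤ (V i : ℝ) := hadj i (by omega)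
      have h3 : (b : ℝ) ≤ (a : ℝ) := horder i (by omega) b hbI a haI
      have hga' : (g a : ℝ) ≤ (a : ℝ) := by
        rw [hga]
        rw [hgb] at h1
        linarith
      exact hfix (i+1) hiM a haI z hz hga' hge
  -- conclude
  obtain ⟨b, hbI, hgb⟩ := hb M (le_refl M)
  have hlt := main M (le_refl M) b hbI
  rw [hgb, hVM] at hlt
  have hb1 : (b : ℝ) ≤ 1 := b.2.2
  have : ((1 : unitInterval) : ℝ) = 1 := rfl
  linarith [hlt, hb1, this.symm ▸ hlt]
end

section
/- Let f : [0,1] → [0,1] be continuous, let J_0 = [c_0,d_0], …, J_k = [c_k,d_k] be closed subintervals, and let 0 = n_0 < n_1 < … < n_{k+1} be integers. Suppose for each 0 ≤ i ≤ k−1 we have f^{n_{i+1}−n_i}(J_i) ⊇ J_{i+1} with f^{n_{i+1}−n_i}(d_i) ∉ (c_{i+1}, d_{i+1}), and also f^{n_{k+1}−n_k}(J_k) ⊇ J_0 with f^{n_{k+1}−n_k}(d_k) ∉ (c_0, d_0). Then there exists z ∈ J_0 such that f^{n_i}(z) ∈ J_i for 0 ≤ i ≤ k and f^{n_{k+1}}(z)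 = z. -/
open Set

noncomputable instance : Inhabited unitInterval := ⟨0⟩

namespace Stmt3Aux

open unitInterval

lemma symm_image_Icc (a b : unitInterval) (hab : a ≤ b) :
    σ '' Icc a b = Icc (σ b) (σ a) := by
  ext x
  constructor
  · rintro ⟨y, ⟨h1, h2⟩, rfl⟩
    exact ⟨strictAnti_symm.antitone h2, strictAnti_symm.antitone h1⟩
  · rintro ⟨h1, h2⟩
    refine ⟨σ x, ⟨?_, ?_⟩, symm_symm x⟩
    · have := strictAnti_symm.antitone h2
      rwa [symm_symm] at this
    · have := strictAnti_symm.antitone h1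
      rwa [symm_symm] at this

/-- Core: if `g p = d`, `g q = c` with `p ≤ q`, `c ≤ d`, there is a subinterval
mapping exactly onto `Icc c d`. -/
lemma core (g : unitInterval → unitInterval) (hg : Continuous g)
    {p q c d : unitInterval} (hpq : p ≤ q) (hcd : c ≤ d)
    (hp : g p = d) (hq : g q = c) :
    ∃ a b, p ≤ a ∧ a ≤ b ∧ b ≤ q ∧ g '' Icc a b = Icc c d := by
  -- least point of Icc p q where g = c
  obtain ⟨b₁, hb₁mem, hb₁lb⟩ :
      ∃ x, IsLeast (Icc p q ∩ g ⁻¹' {c}) x := by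
    refine (isClosed_Icc.inter (isClosed_singleton.preimage hg)).isCompact.exists_isLeast
      ⟨q, ⟨⟨hpq, le_rfl⟩, hq⟩⟩
  obtain ⟨⟨hpb₁, hb₁q⟩, hgb₁'⟩ := hb₁mem
  have hgb₁ : g b₁ = c := hgb₁'
  -- greatest point of Icc p b₁ where g = d
  obtain ⟨a₁, ha₁mem, ha₁ub⟩ :
      ∃ x, IsGreatest (Icc p b₁ ∩ g ⁻¹' {d}) x := by
    refine (isClosed_Icc.inter (isClosed_singleton.preimage hg)).isCompact.exists_isGreatest
      ⟨p, ⟨⟨le_rfl, hpb₁⟩, hp⟩⟩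
  obtain ⟨⟨hpa₁, ha₁b₁⟩, hga₁'⟩ := ha₁mem
  have hga₁ : g a₁ = d := hga₁'
  refine ⟨a₁, b₁, hpa₁, ha₁b₁, hb₁q, ?_⟩
  apply Subset.antisymm
  · rintro y ⟨x, ⟨ha₁x, hxb₁⟩, rfl⟩
    constructor
    · by_contra h
      push_neg at h
      have hx : c ∈ Icc (g x) (g a₁) := ⟨h.le, hga₁ ▸ hcd⟩
      obtain ⟨y, ⟨hy1, hy2⟩, hgy⟩ :=
        intermediate_value_Icc' ha₁x hg.continuousOn hx
      have hxne : x ≠ b₁ := fun he => h.ne (by rw [he, hgb₁])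
      have : b₁ ≤ y := hb₁lb ⟨⟨hpa₁.trans hy1, (hy2.trans hxb₁).trans hb₁q⟩, hgy⟩
      have : b₁ ≤ x := this.trans hy2
      exact hxne (le_antisymm hxb₁ this)
    · by_contra h
      push_neg at h
      have hx : d ∈ Icc (g b₁) (g x) := ⟨hgb₁ ▸ hcd, h.le⟩
      obtain ⟨y, ⟨hy1, hy2⟩, hgy⟩ :=
        intermediate_value_Icc' hxb₁ hg.continuousOn hx
      have hxne : x ≠ a₁ := fun he => h.ne' (by rw [he, hga₁])
      have : y ≤ a₁ := ha₁ub ⟨⟨hpa₁.trans (ha₁x.trans hy1), hy2⟩, hgy⟩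
      have : x ≤ a₁ := hy1.trans this
      exact hxne (le_antisymm this ha₁x)
  · intro y hy
    have := intermediate_value_Icc' ha₁b₁ hg.continuousOn
    rw [hgb₁, hga₁] at this
    exact this hy

/-- Mirror version: `g p = c`, `g q = d`. -/
lemma core' (g : unitInterval → unitInterval) (hg : Continuous g)
    {p q c d : unitInterval} (hpq : p ≤ q) (hcd : c ≤ d)
    (hp : g p = c) (hq : g q = d) :
    ∃ a b, p ≤ a ∧ a ≤ b ∧ b ≤ q ∧ g '' Icc a b = Icc c d := by
  have hσ : σ q ≤ σ p := strictAnti_symm.antitone hpq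
  obtain ⟨a, b, h1, h2, h3, h4⟩ :=
    core (g ∘ σ) (hg.comp continuous_symm) hσ hcd
      (by simp [Function.comp, symm_symm, hq]) (by simp [Function.comp, symm_symm, hp])
  refine ⟨σ b, σ a, ?_, strictAnti_symm.antitone h2, ?_, ?_⟩
  · have := strictAnti_symm.antitone h3; rwa [symm_symm] at this
  · have := strictAnti_symm.antitone h1; rwa [symm_symm] at this
  · rw [show Icc (σ b) (σ a) = σ '' Icc a b from (symm_image_Icc a b h2).symm,
      ← image_comp]
    exact h4

/-- Covering lemma: if `g '' Icc a b ⊇ Icc c d` there is a subinterval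
mapping exactly onto `Icc c d`. -/
lemma cover (g : unitInterval → unitInterval) (hg : Continuous g)
    {a b c d : unitInterval} (hcd : c ≤ d)
    (h : Icc c d ⊆ g '' Icc a b) :
    ∃ a' b', a ≤ a' ∧ a' ≤ b' ∧ b' ≤ b ∧ g '' Icc a' b' = Icc c d := by
  obtain ⟨u, ⟨hau, hub⟩, hu⟩ := h (left_mem_Icc.mpr hcd)
  obtain ⟨v, ⟨hav, hvb⟩, hv⟩ := h (right_mem_Icc.mpr hcd)
  rcases le_total u v with huv | hvu
  · obtain ⟨a', b', h1, h2, h3, h4⟩ := core' g hg huv hcd hu hv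
    exact ⟨a', b', hau.trans h1, h2, h3.trans hvb, h4⟩
  · obtain ⟨a', b', h1, h2, h3, h4⟩ := core g hg hvu hcd hv hu
    exact ⟨a', b', hav.trans h1, h2, h3.trans hub, h4⟩

/-- Fixed point lemma. -/
lemma fix (g : unitInterval → unitInterval) (hg : Continuous g)
    {a b : unitInterval} (hab : a ≤ b)
    (h : Icc a b ⊆ g '' Icc a b) :
    ∃ z ∈ Icc a b, g z = z := by
  obtain ⟨p, hpmem, hp⟩ := h (left_mem_Icc.mpr hab)
  obtain ⟨q, hqmem, hq⟩ := h (right_mem_Icc.mpr hab)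
  set φ : unitInterval → ℝ := fun x => (g x : ℝ) - (x : ℝ) with hφ
  have hφc : Continuous φ := (continuous_subtype_val.comp hg).sub continuous_subtype_val
  have hφp : φ p ≤ 0 := by
    simp only [hφ, hp, sub_nonpos]; exact_mod_cast hpmem.1
  have hφq : 0 ≤ φ q := by
    simp only [hφ, hq, sub_nonneg]; exact_mod_cast hqmem.2
  rcases le_total p q with hpq | hqp
  · obtain ⟨z, hz, hz0⟩ := intermediate_value_Icc hpq hφc.continuousOn ⟨hφp, hφq⟩
    refine ⟨z, ⟨hpmem.1.trans hz.1, hz.2.trans hqmem.2⟩, ?_⟩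
    have : (g z : ℝ) = z := by linarith [sub_eq_zero.mp hz0]
    exact Subtype.ext (sub_eq_zero.mp hz0)
  · obtain ⟨z, hz, hz0⟩ := intermediate_value_Icc' hqp hφc.continuousOn ⟨hφp, hφq⟩
    refine ⟨z, ⟨hqmem.1.trans hz.1, hz.2.trans hpmem.2⟩, ?_⟩
    exact Subtype.ext (sub_eq_zero.mp hz0)

end Stmt3Aux

/-- The interval version of Lemma 2 of the paper: an itinerary of covering relations
along intervals `J_i` at times `n_i`, with the endpoint condition, produces a point
following the intervals which is periodic of period `n_{k+1}`. -/
theorem stmt3 (f : unitInterval → unitInterval) (hf : Continuous f)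
    (k : ℕ) (c d : ℕ → unitInterval) (n : ℕ → ℕ)
    (hn0 : n 0 = 0) (hmono : ∀ i ≤ k, n i < n (i + 1))
    (hcd : ∀ i ≤ k, c i ≤ d i)
    (hcov : ∀ i < k,
      Icc (c (i+1)) (d (i+1)) ⊆ f^[n (i+1) - n i] '' Icc (c i) (d i))
    (hend : ∀ i < k, f^[n (i+1) - n i] (d i) ∉ Ioo (c (i+1)) (d (i+1)))
    (hcovk : Icc (c 0) (d 0) ⊆ f^[n (k+1) - n k] '' Icc (c k) (d k))
    (hendk : f^[n (k+1) - n k] (d k) ∉ Ioo (c 0) (d 0)) :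
    ∃ z ∈ Icc (c 0) (d 0), (∀ i ≤ k, f^[n i] z ∈ Icc (c i) (d i)) ∧
      f^[n (k+1)] z = z := by
  -- monotonicity of n
  have nmono : ∀ y ≤ k + 1, ∀ x ≤ y, n x ≤ n y := by
    intro y
    induction y with
    | zero =>
      intro _ x hx
      obtain rfl : x = 0 := Nat.le_zero.mp hx
      exact le_rfl
    | succ y ih =>
      intro hy x hx
      rcases Nat.eq_or_lt_of_le hx with h | h
      · subst h; exact le_rfl
      · exact (ih (by omega) x (by omega)).trans (hmono y (by omega)).le
  -- the backwards induction
  have key : ∀ t, t ≤ k → ∃ a b, c (k - t) ≤ a ∧ a ≤ b ∧ b ≤ d (k - t) ∧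
      f^[n (k + 1) - n (k - t)] '' Icc a b = Icc (c 0) (d 0) ∧
      ∀ j, k - t ≤ j → j ≤ k → f^[n j - n (k - t)] '' Icc a b ⊆ Icc (c j) (d j) := by
    intro t
    induction t with
    | zero =>
      intro _
      simp only [Nat.sub_zero]
      obtain ⟨a, b, h1, h2, h3, h4⟩ :=
        Stmt3Aux.cover (f^[n (k + 1) - n k]) (hf.iterate _) (hcd 0 (Nat.zero_le k)) hcovk
      refine ⟨a, b, h1, h2, h3, h4, ?_⟩
      intro j hj1 hj2
      have : j = k := le_antisymm hj2 hj1
      subst this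
      simp only [Nat.sub_self, Function.iterate_zero, image_id]
      exact Icc_subset_Icc h1 h3
    | succ t ih =>
      intro ht
      obtain ⟨a, b, h1, h2, h3, h4, h5⟩ := ih (by omega)
      set i := k - (t + 1) with hi
      have hik : i < k := by omega
      have hii' : i + 1 = k - t := by omega
      have hsub : Icc a b ⊆ f^[n (i + 1) - n i] '' Icc (c i) (d i) := by
        refine (Icc_subset_Icc h1 h3).trans ?_
        rw [hii']
        exact hii' ▸ hcov i hik
      obtain ⟨a', b', g1, g2, g3, g4⟩ :=
        Stmt3Aux.cover (f^[n (i + 1) - n i]) (hf.iterate _) h2 hsub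
      have harith : ∀ m, n (i + 1) ≤ n m → m ≤ k + 1 →
          n m - n i = (n m - n (i + 1)) + (n (i + 1) - n i) := by
        intro m hm _
        have : n i ≤ n (i + 1) := (hmono i (by omega)).le
        omega
      have himg : ∀ m, i + 1 ≤ m → m ≤ k + 1 →
          f^[n m - n i] '' Icc a' b' = f^[n m - n (i + 1)] '' Icc a b := by
        intro m hm1 hm2
        have hnm : n (i + 1) ≤ n m := nmono m hm2 (i + 1) hm1
        rw [harith m hnm hm2, Function.iterate_add, image_comp, g4]
      refine ⟨a', b', g1, g2, g3, ?_, ?_⟩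
      · rw [himg (k + 1) (by omega) le_rfl, hii', h4]
      · intro j hj1 hj2
        rcases Nat.eq_or_lt_of_le hj1 with h | h
        · subst h
          simp only [Nat.sub_self, Function.iterate_zero, image_id]
          exact Icc_subset_Icc g1 g3
        · have hj : i + 1 ≤ j := h
          rw [himg j hj (by omega), hii']
          exact h5 j (by omega) hj2
  obtain ⟨a, b, h1, h2, h3, h4, h5⟩ := key k le_rfl
  simp only [Nat.sub_self] at h1 h3 h4 h5
  rw [hn0, Nat.sub_zero] at h4
  have hsub : Icc a b ⊆ f^[n (k + 1)] '' Icc a b := by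
    rw [h4]; exact Icc_subset_Icc h1 h3
  obtain ⟨z, hz, hfz⟩ := Stmt3Aux.fix (f^[n (k + 1)]) (hf.iterate _) h2 hsub
  refine ⟨z, ⟨h1.trans hz.1, hz.2.trans h3⟩, ?_, hfz⟩
  intro i hi
  have := h5 i (Nat.zero_le i) hi
  rw [hn0, Nat.sub_zero] at this
  exact this ⟨z, hz, rfl⟩
end

section
/- Let X be a compact metric space homeomorphic to a finite tree, let Y ⊆ X be a closed connected subset (a subtree), and let f : Y → X be continuous such that for every a ∈ Y the half-open arc (a, f(a)] intersects Y (where [a, f(a)] denotes the unique arc in X from a to f(a)). Then f has a fixed point in Y. -/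
open Set Topology Function

/-- An arc in `X` from `a` to `b` (possibly degenerate), given as its image `A`. -/
def IsArcConn {X : Type*} [TopologicalSpace X] (A : Set X) (a b : X) : Prop :=
  (a = b ∧ A = {a}) ∨
  ∃ f : ℝ → X, ContinuousOn f (Set.Icc 0 1) ∧ Set.InjOn f (Set.Icc 0 1) ∧
    f 0 = a ∧ f 1 = b ∧ f '' Set.Icc 0 1 = A

/-- The number of connected components of a subset. -/
noncomputable def numComponents {X : Type*} [TopologicalSpace X] (S : Set X) : ℕ :=
  Nat.card (ConnectedComponents S)

/-- A (finite topological) tree: a compact, connected, locally connected Hausdorff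
space which is uniquely arcwise connected and has finitely many points of order ≠ 2. -/
class IsTree (X : Type*) [TopologicalSpace X] : Prop where
  t2 : T2Space X
  compact : CompactSpace X
  conn : ConnectedSpace X
  locConn : LocallyConnectedSpace X
  arc_exists : ∀ a b : X, ∃ A : Set X, IsArcConn A a b
  arc_unique : ∀ (a b : X) (A B : Set X), IsArcConn A a b → IsArcConn B a b → A = B
  finite_vertices : {x : X | numComponents ({x}ᶜ : Set X) ≠ 2}.Finite

/-- The number of endpoints of a tree: points whose complement is connected
(i.e. has one connected component). -/
noncomputable def Ends (X : Type*) [TopologicalSpace X] : ℕ :=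
  Set.ncard {x : X | numComponents ({x}ᶜ : Set X) = 1}

/-- The number of edges of a tree: the number of connected components of the
complement of the set of vertices (points of order ≠ 2). -/
noncomputable def Edg (X : Type*) [TopologicalSpace X] : ℕ :=
  numComponents ({x : X | numComponents ({x}ᶜ : Set X) ≠ 2}ᶜ : Set X)

/-- The topological entropy of a self-map. -/
noncomputable def topEnt {X : Type*} [UniformSpace X] (f : X → X) : EReal :=
  Dynamics.coverEntropy f Set.univ


/-! ### Arc calculus in a tree -/

section TreeLemmas

variable {X : Type*} [TopologicalSpace X] [IsTree X]

instance (priority := 100) IsTree.toT2 : T2Space X := IsTree.t2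
instance (priority := 100) IsTree.toCompact : CompactSpace X := IsTree.compact
instance (priority := 100) IsTree.toConn : ConnectedSpace X := IsTree.conn
instance (priority := 100) IsTree.toLocConn : LocallyConnectedSpace X := IsTree.locConn

/-- The unique arc between two points of a tree. -/
noncomputable def arc (a b : X) : Set X := (IsTree.arc_exists a b).choose

lemma arc_spec (a b : X) : IsArcConn (arc a b) a b := (IsTree.arc_exists a b).choose_spec

lemma IsArcConn.arc_eq {A : Set X} {a b : X} (h : IsArcConn A a b) : A = arc a b :=
  IsTree.arc_unique a b A (arc a b) h (arc_spec a b)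

lemma isArcConn_singleton (a : X) : IsArcConn ({a} : Set X) a a := Or.inl ⟨rfl, rfl⟩

lemma arc_self (a : X) : arc a a = ({a} : Set X) := ((isArcConn_singleton a).arc_eq).symm

lemma IsArcConn.symm {A : Set X} {a b : X} (h : IsArcConn A a b) : IsArcConn A b a := by
  rcases h with ⟨hab, hA⟩ | ⟨f, hc, hi, h0, h1, himg⟩
  · exact Or.inl ⟨hab.symm, by rw [hA, hab]⟩
  · refine Or.inr ⟨fun t => f (1 - t), ?_, ?_, by simpa using h1, by simpa using h0, ?_⟩
    · apply hc.comp ((continuous_const.sub continuous_id).continuousOn)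
      intro x hx
      simp only [mem_Icc, id_eq, Pi.sub_apply] at hx ⊢
      constructor <;> linarith [hx.1, hx.2]
    · intro x hx y hy hxy
      simp only [mem_Icc] at hx hy
      have : (1:ℝ) - x = 1 - y := hi (by simp only [mem_Icc]; constructor <;> linarith)
        (by simp only [mem_Icc]; constructor <;> linarith) hxy
      linarith
    · have him : (fun t => (1:ℝ) - t) '' Icc 0 1 = Icc 0 1 := by
        simpa using image_const_sub_Icc (1:ℝ) 0 1
      have h2 : (fun t => f (1 - t)) '' Icc 0 1 = f '' ((fun t => (1:ℝ) - t) '' Icc 0 1) := by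
        rw [Set.image_image]
      rw [h2, him, himg]

lemma arc_comm (a b : X) : arc a b = arc b a := (arc_spec a b).symm.arc_eq

lemma left_mem_arc (a b : X) : a ∈ arc a b := by
  rcases arc_spec a b with ⟨hab, hA⟩ | ⟨f, _, _, h0, _, himg⟩
  · rw [hA]; exact rfl
  · rw [← himg]; exact ⟨0, by simp, h0⟩

lemma right_mem_arc (a b : X) : b ∈ arc a b := by
  rw [arc_comm]; exact left_mem_arc b a

lemma arc_param {a b : X} (h : a ≠ b) :
    ∃ γ : ℝ → X, ContinuousOn γ (Icc 0 1) ∧ InjOn γ (Icc 0 1) ∧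
      γ 0 = a ∧ γ 1 = b ∧ γ '' Icc 0 1 = arc a b := by
  rcases arc_spec a b with ⟨hab, _⟩ | ⟨f, hc, hi, h0, h1, himg⟩
  · exact absurd hab h
  · exact ⟨f, hc, hi, h0, h1, himg⟩

lemma arc_compact (a b : X) : IsCompact (arc a b) := by
  by_cases h : a = b
  · subst h; rw [arc_self]; exact isCompact_singleton
  · obtain ⟨γ, hc, _, _, _, himg⟩ := arc_param h
    rw [← himg]; exact isCompact_Icc.image_of_continuousOn hc

lemma arc_closed (a b : X) : IsClosed (arc a b) := (arc_compact a b).isClosed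

lemma arc_preconn (a b : X) : IsPreconnected (arc a b) := by
  by_cases h : a = b
  · subst h; rw [arc_self]; exact isPreconnected_singleton
  · obtain ⟨γ, hc, _, _, _, himg⟩ := arc_param h
    rw [← himg]; exact isPreconnected_Icc.image γ hc

lemma arc_nonempty (a b : X) : (arc a b).Nonempty := ⟨a, left_mem_arc a b⟩

lemma subarc_left {a b : X} {γ : ℝ → X}
    (hc : ContinuousOn γ (Icc 0 1)) (hi : InjOn γ (Icc 0 1))
    (h0 : γ 0 = a) (himg : γ '' Icc 0 1 = arc a b) {t : ℝ} (ht : t ∈ Icc 0 1) :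
    γ '' Icc 0 t = arc a (γ t) := by
  rcases eq_or_lt_of_le ht.1 with h0t | h0t
  · rw [← h0t, Set.Icc_self, Set.image_singleton, h0, arc_self]
  · have hIcc : Icc 0 t ⊆ Icc (0:ℝ) 1 := Icc_subset_Icc le_rfl ht.2
    have himul : (fun s => t * s) '' Icc 0 1 = Icc 0 t := by
      ext x
      simp only [mem_image, mem_Icc]
      constructor
      · rintro ⟨s, ⟨hs0, hs1⟩, rfl⟩
        exact ⟨mul_nonneg h0t.le hs0, by nlinarith⟩
      · rintro ⟨hx0, hxt⟩
        refine ⟨x / t, ⟨div_nonneg hx0 h0t.le, ?_⟩, ?_⟩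
        · rw [div_le_one h0t]; linarith [ht.2]
        · field_simp
    have hmaps : ∀ s ∈ Icc (0:ℝ) 1, t * s ∈ Icc (0:ℝ) 1 := by
      intro s hs
      apply hIcc
      rw [← himul]
      exact ⟨s, hs, rfl⟩
    have harc : IsArcConn (γ '' Icc 0 t) a (γ t) := by
      refine Or.inr ⟨fun s => γ (t * s), ?_, ?_, ?_, ?_, ?_⟩
      · exact hc.comp (continuous_const.mul continuous_id).continuousOn hmaps
      · intro x hx y hy hxy
        have := hi (hmaps x hx) (hmaps y hy) hxy
        exact mul_left_cancel₀ (ne_of_gt h0t) this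
      · show γ (t * 0) = a
        rw [mul_zero, h0]
      · show γ (t * 1) = γ t
        rw [mul_one]
      · rw [show (fun s => γ (t * s)) '' Icc 0 1 = γ '' ((fun s => t * s) '' Icc 0 1) by
          rw [Set.image_image], himul]
    exact harc.arc_eq

lemma subarc_right {a b : X} {γ : ℝ → X}
    (hc : ContinuousOn γ (Icc 0 1)) (hi : InjOn γ (Icc 0 1))
    (h0 : γ 0 = a) (h1 : γ 1 = b) (himg : γ '' Icc 0 1 = arc a b) {t : ℝ} (ht : t ∈ Icc 0 1) :
    γ '' Icc t 1 = arc (γ t) b := by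
  have hsub : (fun s => (1:ℝ) - s) '' Icc 0 1 = Icc 0 1 := by
    simpa using image_const_sub_Icc (1:ℝ) 0 1
  set δ : ℝ → X := fun s => γ (1 - s) with hδ
  have hmaps : ∀ s ∈ Icc (0:ℝ) 1, (1:ℝ) - s ∈ Icc (0:ℝ) 1 := by
    intro s hs; rw [← hsub]; exact ⟨s, hs, rfl⟩
  have hcδ : ContinuousOn δ (Icc 0 1) :=
    hc.comp (continuous_const.sub continuous_id).continuousOn hmaps
  have hiδ : InjOn δ (Icc 0 1) := by
    intro x hx y hy hxy
    have := hi (hmaps x hx) (hmaps y hy) hxy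
    linarith [this]
  have h0δ : δ 0 = b := by simp [hδ, h1]
  have himgδ : δ '' Icc 0 1 = arc b a := by
    rw [← arc_comm, ← himg]
    rw [show δ '' Icc 0 1 = γ '' ((fun s => (1:ℝ) - s) '' Icc 0 1) by
      rw [Set.image_image], hsub]
  have ht' : (1:ℝ) - t ∈ Icc (0:ℝ) 1 := hmaps t ht
  have := subarc_left hcδ hiδ h0δ himgδ ht'
  have himg2 : δ '' Icc 0 (1 - t) = γ '' Icc t 1 := by
    rw [show δ '' Icc 0 (1 - t) = γ '' ((fun s => (1:ℝ) - s) '' Icc 0 (1 - t)) by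
      rw [Set.image_image]]
    rw [show (fun s => (1:ℝ) - s) '' Icc 0 (1-t) = Icc t 1 by
      simpa using image_const_sub_Icc (1:ℝ) 0 (1 - t)]
  have hδt : δ (1 - t) = γ t := by simp [hδ]
  rw [himg2, hδt] at this
  rw [this, arc_comm]

lemma arc_union_of_mem {a b c : X} (hc : c ∈ arc a b) : arc a c ∪ arc c b = arc a b := by
  by_cases hab : a = b
  · subst hab
    rw [arc_self] at hc
    rcases hc with rfl
    rw [arc_self]; simp
  · obtain ⟨γ, hcon, hinj, h0, h1, himg⟩ := arc_param hab
    rw [← himg] at hc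
    obtain ⟨t, ht, rfl⟩ := hc
    rw [← subarc_left hcon hinj h0 himg ht, ← subarc_right hcon hinj h0 h1 himg ht,
      ← Set.image_union, Icc_union_Icc_eq_Icc ht.1 ht.2, himg]

lemma arc_inter_of_mem {a b c : X} (hc : c ∈ arc a b) : arc a c ∩ arc c b = {c} := by
  by_cases hab : a = b
  · subst hab
    rw [arc_self] at hc
    rcases hc with rfl
    rw [arc_self]; simp
  · obtain ⟨γ, hcon, hinj, h0, h1, himg⟩ := arc_param hab
    rw [← himg] at hc
    obtain ⟨t, ht, rfl⟩ := hc
    rw [← subarc_left hcon hinj h0 himg ht, ← subarc_right hcon hinj h0 h1 himg ht,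
      ← hinj.image_inter (Icc_subset_Icc le_rfl ht.2) (Icc_subset_Icc ht.1 le_rfl),
      Icc_inter_Icc_eq_singleton ht.1 ht.2, Set.image_singleton]

lemma arc_subset_left {a b c : X} (hc : c ∈ arc a b) : arc a c ⊆ arc a b := by
  rw [← arc_union_of_mem hc]; exact subset_union_left

lemma arc_subset_right {a b c : X} (hc : c ∈ arc a b) : arc c b ⊆ arc a b := by
  rw [← arc_union_of_mem hc]; exact subset_union_right

lemma arc_antisymm {a b b' : X} (h1 : b' ∈ arc a b) (h2 : b ∈ arc a b') : b = b' := by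
  have : b ∈ arc a b' ∩ arc b' b := ⟨h2, right_mem_arc b' b⟩
  rw [arc_inter_of_mem h1] at this
  exact this

lemma arc_concat {a b c : X} (h : arc a c ∩ arc c b = {c}) :
    arc a b = arc a c ∪ arc c b := by
  by_cases hac : a = c
  · subst hac
    rw [arc_self]
    have : a ∈ arc a b := left_mem_arc a b
    rw [Set.union_eq_self_of_subset_left (by simpa using left_mem_arc a b)]
  · by_cases hcb : c = b
    · subst hcb
      rw [arc_self]
      exact (Set.union_eq_self_of_subset_right (by simpa using right_mem_arc _ _)).symm
    · obtain ⟨γ₁, hc1, hi1, h01, h11, himg1⟩ := arc_param hac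
      obtain ⟨γ₂, hc2, hi2, h02, h12, himg2⟩ := arc_param hcb
      classical
      set Γ₁ : ℝ → X := fun s => γ₁ (min 1 (max 0 s)) with hΓ₁
      set Γ₂ : ℝ → X := fun s => γ₂ (min 1 (max 0 s)) with hΓ₂
      have hclamp : ∀ s : ℝ, min 1 (max 0 s) ∈ Icc (0:ℝ) 1 := by
        intro s
        constructor
        · exact le_min zero_le_one (le_max_left 0 s)
        · exact min_le_left 1 _
      have hclamp_eq : ∀ s ∈ Icc (0:ℝ) 1, min 1 (max 0 s) = s := by
        intro s hs
        rw [max_eq_right hs.1, min_eq_right hs.2]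
      have hcΓ₁ : Continuous Γ₁ :=
        hc1.comp_continuous (continuous_const.min (continuous_const.max continuous_id)) hclamp
      have hcΓ₂ : Continuous Γ₂ :=
        hc2.comp_continuous (continuous_const.min (continuous_const.max continuous_id)) hclamp
      have hΓ₁eq : ∀ s ∈ Icc (0:ℝ) 1, Γ₁ s = γ₁ s := fun s hs => by
        simp only [hΓ₁]; rw [hclamp_eq s hs]
      have hΓ₂eq : ∀ s ∈ Icc (0:ℝ) 1, Γ₂ s = γ₂ s := fun s hs => by
        simp only [hΓ₂]; rw [hclamp_eq s hs]
      set g : ℝ → X := fun s => if s ≤ 1/2 then Γ₁ (2*s) else Γ₂ (2*s - 1) with hg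
      have hcg : Continuous g := by
        apply Continuous.if_le
          (hcΓ₁.comp (continuous_const.mul continuous_id))
          (hcΓ₂.comp ((continuous_const.mul continuous_id).sub continuous_const))
          continuous_id continuous_const
        intro s hs
        subst hs
        show Γ₁ (2 * (1/2)) = Γ₂ (2 * (1/2) - 1)
        norm_num
        rw [show Γ₁ 1 = γ₁ 1 from hΓ₁eq 1 (by norm_num),
          show Γ₂ 0 = γ₂ 0 from hΓ₂eq 0 (by norm_num), h11, h02]
      have hval : ∀ s ∈ Icc (0:ℝ) 1, (s ≤ 1/2 → g s = γ₁ (2*s)) ∧ (¬ (s ≤ 1/2) → g s = γ₂ (2*s - 1)) := by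
        intro s hs
        constructor
        · intro hle
          simp only [hg, if_pos hle]
          exact hΓ₁eq _ ⟨by linarith [hs.1], by linarith⟩
        · intro hgt
          push_neg at hgt
          simp only [hg, if_neg (not_le.mpr hgt)]
          exact hΓ₂eq _ ⟨by linarith, by linarith [hs.2]⟩
      have himgg : g '' Icc 0 1 = arc a c ∪ arc c b := by
        apply Set.Subset.antisymm
        · rintro x ⟨s, hs, rfl⟩
          by_cases hle : s ≤ 1/2
          · left
            rw [(hval s hs).1 hle, ← himg1]
            exact ⟨2*s, ⟨by linarith [hs.1], by linarith⟩, rfl⟩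
          · right
            rw [(hval s hs).2 hle, ← himg2]
            push_neg at hle
            exact ⟨2*s - 1, ⟨by linarith, by linarith [hs.2]⟩, rfl⟩
        · rintro x (hx | hx)
          · rw [← himg1] at hx
            obtain ⟨u, hu, rfl⟩ := hx
            refine ⟨u/2, ⟨by linarith [hu.1], by linarith [hu.2]⟩, ?_⟩
            rw [(hval (u/2) ⟨by linarith [hu.1], by linarith [hu.2]⟩).1 (by linarith [hu.2])]
            ring_nf
          · rw [← himg2] at hx
            obtain ⟨u, hu, rfl⟩ := hx
            rcases eq_or_lt_of_le hu.1 with h0u | h0u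
            · refine ⟨1/2, ⟨by norm_num, by norm_num⟩, ?_⟩
              rw [(hval (1/2) ⟨by norm_num, by norm_num⟩).1 le_rfl]
              norm_num
              rw [h11, ← h0u, h02]
            · refine ⟨(u+1)/2, ⟨by linarith [hu.1], by linarith [hu.2]⟩, ?_⟩
              rw [(hval ((u+1)/2) ⟨by linarith [hu.1], by linarith [hu.2]⟩).2 (by linarith)]
              ring_nf
      have hinjg : InjOn g (Icc 0 1) := by
        intro x hx y hy hxy
        by_cases hlex : x ≤ 1/2 <;> by_cases hley : y ≤ 1/2
        · rw [(hval x hx).1 hlex, (hval y hy).1 hley] at hxy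
          have := hi1 (⟨by linarith [hx.1], by linarith⟩ : (2*x) ∈ Icc (0:ℝ) 1)
            (⟨by linarith [hy.1], by linarith⟩ : (2*y) ∈ Icc (0:ℝ) 1) hxy
          linarith
        · exfalso
          rw [(hval x hx).1 hlex, (hval y hy).2 hley] at hxy
          push_neg at hley
          have hmem : γ₁ (2*x) ∈ arc a c ∩ arc c b := by
            constructor
            · rw [← himg1]; exact ⟨2*x, ⟨by linarith [hx.1], by linarith⟩, rfl⟩
            · rw [hxy, ← himg2]; exact ⟨2*y - 1, ⟨by linarith, by linarith [hy.2]⟩, rfl⟩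
          rw [h] at hmem
          have h1x : (2:ℝ)*x = 1 := by
            have : γ₁ (2*x) = γ₁ 1 := by rw [hmem, ← h11]
            exact hi1 ⟨by linarith [hx.1], by linarith⟩ (by norm_num) this
          have h0y : (2:ℝ)*y - 1 = 0 := by
            have : γ₂ (2*y - 1) = γ₂ 0 := by rw [← hxy, hmem, ← h02]
            exact hi2 ⟨by linarith, by linarith [hy.2]⟩ (by norm_num) this
          linarith
        · exfalso
          rw [(hval x hx).2 hlex, (hval y hy).1 hley] at hxy
          push_neg at hlex
          have hmem : γ₁ (2*y) ∈ arc a c ∩ arc c b := by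
            constructor
            · rw [← himg1]; exact ⟨2*y, ⟨by linarith [hy.1], by linarith⟩, rfl⟩
            · rw [← hxy, ← himg2]; exact ⟨2*x - 1, ⟨by linarith, by linarith [hx.2]⟩, rfl⟩
          rw [h] at hmem
          have h1y : (2:ℝ)*y = 1 := by
            have : γ₁ (2*y) = γ₁ 1 := by rw [hmem, ← h11]
            exact hi1 ⟨by linarith [hy.1], by linarith⟩ (by norm_num) this
          have h0x : (2:ℝ)*x - 1 = 0 := by
            have : γ₂ (2*x - 1) = γ₂ 0 := by rw [hxy, hmem, ← h02]
            exact hi2 ⟨by linarith, by linarith [hx.2]⟩ (by norm_num) this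
          linarith
        · rw [(hval x hx).2 hlex, (hval y hy).2 hley] at hxy
          push_neg at hlex hley
          have := hi2 (⟨by linarith, by linarith [hx.2]⟩ : (2*x-1) ∈ Icc (0:ℝ) 1)
            (⟨by linarith, by linarith [hy.2]⟩ : (2*y-1) ∈ Icc (0:ℝ) 1) hxy
          linarith
      have harc : IsArcConn (arc a c ∪ arc c b) a b := by
        refine Or.inr ⟨g, hcg.continuousOn, hinjg, ?_, ?_, himgg⟩
        · rw [(hval 0 (by norm_num)).1 (by norm_num)]
          norm_num
          rw [show γ₁ 0 = a from h01]
        · rw [(hval 1 (by norm_num)).2 (by norm_num)]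
          norm_num
          rw [show γ₂ 1 = b from h12]
      exact harc.arc_eq.symm

lemma arc_mid {a b : X} (h : a ≠ b) : ∃ c ∈ arc a b, c ≠ a ∧ c ≠ b := by
  obtain ⟨γ, _, hi, h0, h1, himg⟩ := arc_param h
  refine ⟨γ (1/2), by rw [← himg]; exact ⟨1/2, by norm_num, rfl⟩, ?_, ?_⟩
  · rw [← h0]
    intro heq
    have := hi (by norm_num : (1/2:ℝ) ∈ Icc (0:ℝ) 1) (by norm_num : (0:ℝ) ∈ Icc (0:ℝ) 1) heq
    norm_num at this
  · rw [← h1]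
    intro heq
    have := hi (by norm_num : (1/2:ℝ) ∈ Icc (0:ℝ) 1) (by norm_num : (1:ℝ) ∈ Icc (0:ℝ) 1) heq
    norm_num at this

lemma arc_meet (a b c : X) :
    ∃ m, arc a b ∩ arc a c = arc a m ∧ m ∈ arc a b ∧ m ∈ arc a c := by
  by_cases hab : a = b
  · subst hab
    refine ⟨a, ?_, left_mem_arc a a, left_mem_arc a c⟩
    rw [arc_self]
    apply Set.Subset.antisymm inter_subset_left
    rintro x rfl
    exact ⟨rfl, left_mem_arc x c⟩
  · obtain ⟨γ, hcon, hinj, h0, h1, himg⟩ := arc_param hab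
    set T : Set ℝ := Icc 0 1 ∩ γ ⁻¹' (arc a c) with hT
    have hTclosed : IsClosed T := hcon.preimage_isClosed_of_isClosed isClosed_Icc (arc_closed a c)
    have hTcompact : IsCompact T := isCompact_Icc.of_isClosed_subset hTclosed inter_subset_left
    have hTne : T.Nonempty := ⟨0, by norm_num, by rw [Set.mem_preimage, h0]; exact left_mem_arc a c⟩
    have htT : sSup T ∈ T := hTcompact.sSup_mem hTne
    set t := sSup T with htdef
    have htIcc : t ∈ Icc (0:ℝ) 1 := htT.1
    refine ⟨γ t, ?_, ?_, htT.2⟩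
    · rw [← subarc_left hcon hinj h0 himg htIcc]
      apply Set.Subset.antisymm
      · rintro x ⟨hx1, hx2⟩
        rw [← himg] at hx1
        obtain ⟨s, hs, rfl⟩ := hx1
        have hsT : s ∈ T := ⟨hs, hx2⟩
        have hst : s ≤ t := le_csSup (isCompact_Icc.bddAbove.mono inter_subset_left) hsT
        exact ⟨s, ⟨hs.1, hst⟩, rfl⟩
      · rintro x ⟨s, hs, rfl⟩
        have hsI : s ∈ Icc (0:ℝ) 1 := ⟨hs.1, le_trans hs.2 htIcc.2⟩
        constructor
        · rw [← himg]; exact ⟨s, hsI, rfl⟩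
        · have : γ s ∈ arc a (γ t) := by
            rw [← subarc_left hcon hinj h0 himg htIcc]; exact ⟨s, hs, rfl⟩
          exact arc_subset_left htT.2 this
    · rw [← himg]; exact ⟨t, htIcc, rfl⟩

lemma arc_median (a b c : X) :
    ∃ m, m ∈ arc a b ∧ m ∈ arc a c ∧ m ∈ arc b c ∧ arc a b ∩ arc a c = arc a m := by
  obtain ⟨m, hmeet, hmb, hmc⟩ := arc_meet a b c
  refine ⟨m, hmb, hmc, ?_, hmeet⟩
  have hinter : arc b m ∩ arc m c = {m} := by
    apply Set.Subset.antisymm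
    · rintro x ⟨hx1, hx2⟩
      have hx1' : x ∈ arc a b := by
        rw [arc_comm] at hx1
        exact arc_subset_right hmb hx1
      have hx2' : x ∈ arc a c := arc_subset_right hmc hx2
      have : x ∈ arc a m := by rw [← hmeet]; exact ⟨hx1', hx2'⟩
      have : x ∈ arc a m ∩ arc m b := ⟨this, by rw [arc_comm]; exact hx1⟩
      rw [arc_inter_of_mem hmb] at this
      exact this
    · rintro x rfl
      exact ⟨right_mem_arc _ _, left_mem_arc _ _⟩
  have := arc_concat hinter
  rw [this]
  exact Set.mem_union_left _ (right_mem_arc b m)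

lemma arc_triangle (a b c : X) : arc a c ⊆ arc a b ∪ arc b c := by
  obtain ⟨m, hmab, hmac, hmbc, hmeet⟩ := arc_median a b c
  intro x hx
  rw [← arc_union_of_mem hmac] at hx
  rcases hx with hx | hx
  · left
    rw [← hmeet] at hx
    exact hx.1
  · right
    exact arc_subset_right hmbc hx

end TreeLemmas





/-! ### Point-set topology helpers -/

section TreeTop

variable {X : Type*} [TopologicalSpace X] [IsTree X]

lemma isOpen_ccIn {F : Set X} (hF : IsOpen F) (x : X) : IsOpen (connectedComponentIn F x) := by
  by_cases hx : x ∈ F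
  · exact locallyConnectedSpace_iff_connectedComponentIn_open.mp inferInstance F hF x hx
  · rw [connectedComponentIn_eq_empty hx]; exact isOpen_empty

lemma closure_ccIn_subset {F : Set X} (x : X) :
    closure (connectedComponentIn F x) ∩ F ⊆ connectedComponentIn F x := by
  intro y hy
  by_cases hx : x ∈ F
  · have hD : IsPreconnected (connectedComponentIn F x ∪ {y}) := by
      apply isPreconnected_connectedComponentIn.subset_closure subset_union_left
      intro z hz
      rcases hz with hz | hz
      · exact subset_closure hz
      · simp only [mem_singleton_iff] at hz; subst hz; exact hy.1
    have hsub : connectedComponentIn F x ∪ {y} ⊆ F :=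
      union_subset (connectedComponentIn_subset F x) (by simpa using hy.2)
    have hxmem : x ∈ connectedComponentIn F x ∪ {y} := Or.inl (mem_connectedComponentIn hx)
    exact hD.subset_connectedComponentIn hxmem hsub (Or.inr rfl)
  · rw [connectedComponentIn_eq_empty hx] at hy ⊢
    simpa using hy.1

lemma mem_closure_ccIn_compl {s x : X} (hx : x ≠ s) :
    s ∈ closure (connectedComponentIn ({s}ᶜ : Set X) x) := by
  by_contra hs
  set D := connectedComponentIn ({s}ᶜ : Set X) x with hD
  have hxD : x ∈ D := mem_connectedComponentIn (by simpa using hx)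
  have hclosed : IsClosed D := by
    rw [← closure_subset_iff_isClosed]
    intro y hy
    by_cases hys : y = s
    · exact absurd (hys ▸ hy) hs
    · exact closure_ccIn_subset x ⟨hy, by simpa using hys⟩
  have hclopen : IsClopen D := ⟨hclosed, isOpen_ccIn isOpen_compl_singleton x⟩
  have huniv : D = univ := hclopen.eq_univ ⟨x, hxD⟩
  have : s ∈ D := huniv ▸ mem_univ s
  simpa using connectedComponentIn_subset ({s}ᶜ : Set X) x this

/-- `s` cuts `a` from `b` : every connected set containing `a` and `b` contains `s`. -/
def Cuts (s a b : X) : Prop :=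
  s ≠ a ∧ s ≠ b ∧ ∀ T : Set X, IsPreconnected T → a ∈ T → b ∈ T → s ∈ T

lemma cuts_iff {s a b : X} (ha : s ≠ a) (hb : s ≠ b) :
    Cuts s a b ↔ b ∉ connectedComponentIn ({s}ᶜ : Set X) a := by
  constructor
  · rintro ⟨-, -, hc⟩ hmem
    have hsub : connectedComponentIn ({s}ᶜ : Set X) a ⊆ {s}ᶜ := connectedComponentIn_subset _ _
    have haa : a ∈ connectedComponentIn ({s}ᶜ : Set X) a :=
      mem_connectedComponentIn (by simpa using ha.symm)
    have := hc _ isPreconnected_connectedComponentIn haa hmem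
    exact (hsub this) rfl
  · intro hmem
    refine ⟨ha, hb, fun T hT haT hbT => ?_⟩
    by_contra hsT
    have hTsub : T ⊆ ({s}ᶜ : Set X) := fun z hz => by
      simp only [mem_compl_singleton_iff]
      rintro rfl; exact hsT hz
    exact hmem (hT.subset_connectedComponentIn haT hTsub hbT)

/-- The (finite) set of vertices of the tree. -/
def Vtx (X : Type*) [TopologicalSpace X] : Set X :=
  {x : X | numComponents ({x}ᶜ : Set X) ≠ 2}

lemma vtx_finite : (Vtx X).Finite := IsTree.finite_vertices

lemma numComponents_eq_one {S : Set X} (hne : S.Nonempty) (hconn : IsPreconnected S) :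
    numComponents S = 1 := by
  have h1 : PreconnectedSpace ↥S := isPreconnected_iff_preconnectedSpace.mp hconn
  have hne' : Nonempty ↥S := hne.to_subtype
  rw [numComponents, Nat.card_eq_one_iff_exists]
  obtain ⟨x⟩ := hne'
  refine ⟨ConnectedComponents.mk x, fun y => ?_⟩
  obtain ⟨y', rfl⟩ := ConnectedComponents.surjective_coe y
  rw [ConnectedComponents.coe_eq_coe, PreconnectedSpace.connectedComponent_eq_univ,
    PreconnectedSpace.connectedComponent_eq_univ]

lemma mem_vtx_of_noncut {y : X} (hne : ({y}ᶜ : Set X).Nonempty)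
    (hconn : IsPreconnected ({y}ᶜ : Set X)) : y ∈ Vtx X := by
  simp only [Vtx, mem_setOf_eq]
  rw [numComponents_eq_one hne hconn]
  norm_num

/-- If the complement of `s` has exactly two components, either of them is determined. -/
lemma exists_other_component {s : X} (h2 : numComponents ({s}ᶜ : Set X) = 2) {x : X}
    (hx : x ≠ s) :
    ∃ d : X, d ≠ s ∧
      connectedComponentIn ({s}ᶜ : Set X) d ∩ connectedComponentIn ({s}ᶜ : Set X) x = ∅ ∧
      ∀ z : X, z ≠ s →
        z ∈ connectedComponentIn ({s}ᶜ : Set X) d ∪ connectedComponentIn ({s}ᶜ : Set X) x := by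
  set S : Set X := ({s}ᶜ : Set X) with hS
  have hxS : x ∈ S := by exact hx
  rw [numComponents, Nat.card_eq_two_iff] at h2
  obtain ⟨p, q, hpq, hcov⟩ := h2
  set x' : ↥S := ⟨x, hxS⟩ with hx'
  have hx'mem : ConnectedComponents.mk x' ∈ ({p, q} : Set (ConnectedComponents ↥S)) := by
    rw [hcov]; exact mem_univ _
  -- let o be the other component
  obtain ⟨o, ho, hoxo⟩ : ∃ o : ConnectedComponents ↥S, o ∈ ({p, q} : Set (ConnectedComponents ↥S)) ∧
      o ≠ ConnectedComponents.mk x' := by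
    rcases hx'mem with hh | hh
    · exact ⟨q, Or.inr rfl, fun he => hpq (hh.symm.trans he.symm)⟩
    · simp only [mem_singleton_iff] at hh
      exact ⟨p, Or.inl rfl, fun he => hpq (he.trans hh)⟩
  obtain ⟨d', rfl⟩ := ConnectedComponents.surjective_coe o
  have hox : ConnectedComponents.mk d' ≠ ConnectedComponents.mk x' := hoxo
  refine ⟨d'.val, mem_compl_singleton_iff.mp d'.prop, ?_, ?_⟩
  · have hdisj : Disjoint (connectedComponent d') (connectedComponent x') :=
      connectedComponent_disjoint (fun he => hox (ConnectedComponents.coe_eq_coe.mpr he))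
    rw [connectedComponentIn_eq_image d'.prop, connectedComponentIn_eq_image hxS,
      ← Set.image_inter Subtype.val_injective]
    have hinter : connectedComponent (⟨d'.val, d'.prop⟩ : ↥S) ∩ connectedComponent (⟨x, hxS⟩ : ↥S) = ∅ := by
      rw [Subtype.coe_eta]
      exact Set.disjoint_iff_inter_eq_empty.mp hdisj
    rw [hinter, Set.image_empty]
  · have hmm : ∀ w : ConnectedComponents ↥S,
        w = ConnectedComponents.mk d' ∨ w = ConnectedComponents.mk x' := by
      intro w
      have hw : w ∈ ({p, q} : Set (ConnectedComponents ↥S)) := by rw [hcov]; exact mem_univ _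
      have hd : ConnectedComponents.mk d' = p ∨ ConnectedComponents.mk d' = q := by
        simpa using ho
      have hx2 : ConnectedComponents.mk x' = p ∨ ConnectedComponents.mk x' = q := by
        simpa using hx'mem
      have hw2 : w = p ∨ w = q := by simpa using hw
      rcases hd with hd | hd <;> rcases hx2 with hx2 | hx2
      · exact absurd (hd.trans hx2.symm) hox
      · rcases hw2 with hw2 | hw2
        · exact Or.inl (hw2.trans hd.symm)
        · exact Or.inr (hw2.trans hx2.symm)
      · rcases hw2 with hw2 | hw2
        · exact Or.inr (hw2.trans hx2.symm)
        · exact Or.inl (hw2.trans hd.symm)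
      · exact absurd (hd.trans hx2.symm) hox
    intro z hz
    have hzS : z ∈ S := by exact hz
    set z' : ↥S := ⟨z, hzS⟩ with hz'
    rcases hmm (ConnectedComponents.mk z') with hh | hh
    · left
      rw [connectedComponentIn_eq_image d'.prop]
      rw [ConnectedComponents.coe_eq_coe] at hh
      exact ⟨z', by rw [← hh]; exact mem_connectedComponent, rfl⟩
    · right
      rw [connectedComponentIn_eq_image hxS]
      rw [ConnectedComponents.coe_eq_coe] at hh
      exact ⟨z', by rw [← hh]; exact mem_connectedComponent, rfl⟩

end TreeTop


/-! ### Existence of non-cut points in continua -/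

section NonCut

variable {X : Type*} [TopologicalSpace X] [T2Space X]

/-- A "side" of the continuum `K` at the point `y`. -/
def GoodSide (K : Set X) (y : X) (S : Set X) : Prop :=
  y ∈ K ∧ S.Nonempty ∧ S ⊆ K \ {y} ∧ IsClosed (S ∪ {y}) ∧ IsClosed (K \ S)

lemma GoodSide.not_mem {K S : Set X} {y : X} (h : GoodSide K y S) : y ∉ S :=
  fun hy => (h.2.2.1 hy).2 rfl

lemma goodSide_union_eq {K S : Set X} {y : X} (h : GoodSide K y S) :
    ((K \ S) \ {y}) ∪ {y} = K \ S := by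
  ext z
  constructor
  · rintro (hz | hz)
    · exact hz.1
    · simp only [mem_singleton_iff] at hz; subst hz
      exact ⟨h.1, h.not_mem⟩
  · intro hz
    by_cases hzy : z = y
    · exact Or.inr (by simp [hzy])
    · exact Or.inl ⟨hz, by simp [hzy]⟩

lemma goodSide_compl_eq {K S : Set X} {y : X} (h : GoodSide K y S) :
    K \ ((K \ S) \ {y}) = S ∪ {y} := by
  ext z
  constructor
  · rintro ⟨hzK, hz⟩
    by_cases hzy : z = y
    · exact Or.inr (by simp [hzy])
    · by_cases hzS : z ∈ S
      · exact Or.inl hzS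
      · exact absurd ⟨⟨hzK, hzS⟩, by simp [hzy]⟩ hz
  · rintro (hz | hz)
    · exact ⟨(h.2.2.1 hz).1, fun hc => hc.1.2 hz⟩
    · simp only [mem_singleton_iff] at hz; subst hz
      exact ⟨h.1, fun hc => hc.2 rfl⟩

lemma goodSide_diff_singleton {K S : Set X} {y : X} (h : GoodSide K y S)
    (hB : ¬ ((K \ S) \ {y}).Nonempty) : K \ S = {y} := by
  rw [← goodSide_union_eq h]
  rw [Set.not_nonempty_iff_eq_empty] at hB
  rw [hB, Set.empty_union]

lemma goodSide_preconn {K S : Set X} {y : X} (hKc : IsPreconnected K)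
    (h : GoodSide K y S) : IsPreconnected (S ∪ {y}) := by
  obtain ⟨hyK, hSne, hSsub, hclT, hclC⟩ := h
  by_cases hB : ((K \ S) \ {y}).Nonempty
  · rw [isPreconnected_iff_subset_of_disjoint_closed]
    have key : ∀ p q : Set X, IsClosed p → IsClosed q → S ∪ {y} ⊆ p ∪ q →
        (S ∪ {y}) ∩ (p ∩ q) = ∅ → y ∈ p → S ∪ {y} ⊆ p := by
      intro p q hp hq hcov hdisj hyp
      set C₁ := ((S ∪ {y}) ∩ p) ∪ (K \ S) with hC₁
      set C₂ := (S ∪ {y}) ∩ q with hC₂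
      have hC₁closed : IsClosed C₁ := (hclT.inter hp).union hclC
      have hC₂closed : IsClosed C₂ := hclT.inter hq
      have hKcov : K ⊆ C₁ ∪ C₂ := by
        intro z hz
        by_cases hzS : z ∈ S ∪ {y}
        · rcases hcov hzS with hzp | hzq
          · exact Or.inl (Or.inl ⟨hzS, hzp⟩)
          · exact Or.inr ⟨hzS, hzq⟩
        · exact Or.inl (Or.inr ⟨hz, fun hc => hzS (Or.inl hc)⟩)
      have hKdisj : K ∩ (C₁ ∩ C₂) = ∅ := by
        ext z
        simp only [mem_inter_iff, mem_empty_iff_false, iff_false, not_and]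
        intro hzK hz1 hz2
        rcases hz1 with hz1 | hz1
        · have : z ∈ (S ∪ {y}) ∩ (p ∩ q) := ⟨hz1.1, hz1.2, hz2.2⟩
          rw [hdisj] at this; exact this
        · have hzy : z = y := by
            rcases hz2.1 with hz | hz
            · exact absurd hz hz1.2
            · simpa using hz
          subst hzy
          have : z ∈ (S ∪ {z}) ∩ (p ∩ q) := ⟨Or.inr rfl, hyp, hz2.2⟩
          rw [hdisj] at this; exact this
      rcases isPreconnected_iff_subset_of_disjoint_closed.mp hKc C₁ C₂ hC₁closed hC₂closed
        hKcov hKdisj with hK1 | hK2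
      · intro z hz
        have hzK : z ∈ K := by
          rcases hz with hz | hz
          · exact (hSsub hz).1
          · simp only [mem_singleton_iff] at hz; subst hz; exact hyK
        rcases hK1 hzK with hz1 | hz1
        · exact hz1.2
        · rcases hz with hzS | hzy
          · exact absurd hzS hz1.2
          · simp only [mem_singleton_iff] at hzy; subst hzy; exact hyp
      · exfalso
        obtain ⟨b, hb⟩ := hB
        have hbC : b ∈ C₂ := hK2 hb.1.1
        rcases hbC.1 with hbS | hby
        · exact hb.1.2 hbS
        · exact hb.2 hby
    intro p q hp hq hcov hdisj
    rcases hcov (Or.inr rfl) with hyp | hyq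
    · exact Or.inl (key p q hp hq hcov hdisj hyp)
    · refine Or.inr (key q p hq hp ?_ ?_ hyq)
      · rwa [Set.union_comm q p]
      · rwa [Set.inter_comm q p]
  · have hKS : K \ S = {y} :=
      goodSide_diff_singleton ⟨hyK, hSne, hSsub, hclT, hclC⟩ hB
    have hSK : S ∪ {y} = K := by
      apply Set.Subset.antisymm
      · apply Set.union_subset (fun z hz => (hSsub hz).1)
        intro z hz
        simp only [mem_singleton_iff] at hz; subst hz; exact hyK
      · intro z hz
        by_cases hzS : z ∈ S
        · exact Or.inl hzS
        · have : z ∈ K \ S := ⟨hz, hzS⟩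
          rw [hKS] at this
          exact Or.inr this
    rw [hSK]; exact hKc

lemma goodSide_compl_preconn {K S : Set X} {y : X} (hKc : IsPreconnected K)
    (h : GoodSide K y S) : IsPreconnected (K \ S) := by
  by_cases hB : ((K \ S) \ {y}).Nonempty
  · have hgood : GoodSide K y ((K \ S) \ {y}) := by
      refine ⟨h.1, hB, fun z hz => ⟨hz.1.1, hz.2⟩, ?_, ?_⟩
      · rw [goodSide_union_eq h]; exact h.2.2.2.2
      · rw [goodSide_compl_eq h]; exact h.2.2.2.1
    have := goodSide_preconn hKc hgood
    rwa [goodSide_union_eq h] at this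
  · rw [goodSide_diff_singleton h hB]
    exact isPreconnected_singleton

lemma goodSide_nested {K : Set X} {s y z : X} {S S' : Set X} (hKc : IsPreconnected K)
    (hsK : s ∈ K) (hGS : GoodSide K y S) (hsS : s ∉ S)
    (hGS' : GoodSide K z S') (hsS' : s ∉ S') (hzS : z ∈ S) :
    S' ∪ {z} ⊆ S := by
  have hpre : IsPreconnected (K \ S) := goodSide_compl_preconn hKc hGS
  have hcov : K \ S ⊆ (S' ∪ {z}) ∪ (K \ S') := by
    intro w hw
    by_cases hwS' : w ∈ S'
    · exact Or.inl (Or.inl hwS')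
    · exact Or.inr ⟨hw.1, hwS'⟩
  have hdisj : (K \ S) ∩ ((S' ∪ {z}) ∩ (K \ S')) = ∅ := by
    ext w
    simp only [mem_inter_iff, mem_empty_iff_false, iff_false, not_and]
    intro hwKS hw1 hw2
    rcases hw1 with hw | hw
    · exact hw2.2 hw
    · simp only [mem_singleton_iff] at hw; subst hw
      exact hwKS.2 hzS
  rcases isPreconnected_iff_subset_of_disjoint_closed.mp hpre _ _ hGS'.2.2.2.1 hGS'.2.2.2.2
    hcov hdisj with h1 | h2
  · exfalso
    have hsKS : s ∈ K \ S := ⟨hsK, hsS⟩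
    rcases h1 hsKS with hs' | hs'
    · exact hsS' hs'
    · simp only [mem_singleton_iff] at hs'; subst hs'
      exact hsS hzS
  · intro w hw
    rcases hw with hw | hw
    · by_contra hwS
      have hwK : w ∈ K := (hGS'.2.2.1 hw).1
      exact (h2 ⟨hwK, hwS⟩).2 hw
    · simp only [mem_singleton_iff] at hw; subst hw
      exact hzS

/-- Every nondegenerate continuum has a non-cut point different from any given point. -/
theorem exists_noncut {K : Set X} (hK : IsCompact K) (hKc : IsPreconnected K) {s t : X}
    (hs : s ∈ K) (ht : t ∈ K) (hst : t ≠ s) :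
    ∃ y ∈ K, y ≠ s ∧ IsPreconnected (K \ {y}) := by
  by_contra hno
  push_neg at hno
  -- every point other than s is a cut point; choose a side at each
  have hmk : ∀ y : X, ∃ S : Set X, y ∈ K → y ≠ s → (GoodSide K y S ∧ s ∉ S) := by
    intro y
    by_cases hy : y ∈ K ∧ y ≠ s
    · have hnp : ¬ IsPreconnected (K \ {y}) := hno y hy.1 hy.2
      rw [isPreconnected_iff_subset_of_disjoint_closed] at hnp
      push_neg at hnp
      obtain ⟨u, v, hu, hv, hcov, hdisj, hnu, hnv⟩ := hnp
      set A : Set X := (K \ {y}) ∩ u with hA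
      set B : Set X := (K \ {y}) ∩ v with hB
      have hAB : A ∪ B = K \ {y} := by
        apply Set.Subset.antisymm (Set.union_subset inter_subset_left inter_subset_left)
        intro z hz
        rcases hcov hz with hzu | hzv
        · exact Or.inl ⟨hz, hzu⟩
        · exact Or.inr ⟨hz, hzv⟩
      have hABdisj : A ∩ B = ∅ := by
        ext z
        simp only [mem_inter_iff, mem_empty_iff_false, iff_false, not_and]
        intro hzA hzB
        have : z ∈ K \ {y} ∩ (u ∩ v) := ⟨hzA.1, hzA.2, hzB.2⟩
        rw [hdisj] at this; exact this
      have hAne : A.Nonempty := by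
        obtain ⟨z, hz, hzv⟩ := Set.not_subset.mp hnv
        rcases hcov hz with hzu | hzv'
        · exact ⟨z, hz, hzu⟩
        · exact absurd hzv' hzv
      have hBne : B.Nonempty := by
        obtain ⟨z, hz, hzu⟩ := Set.not_subset.mp hnu
        rcases hcov hz with hzu' | hzv
        · exact absurd hzu' hzu
        · exact ⟨z, hz, hzv⟩
      have hAT : A ∪ {y} = (K ∩ u) ∪ {y} := by
        ext z
        constructor
        · rintro (hz | hz)
          · exact Or.inl ⟨hz.1.1, hz.2⟩
          · exact Or.inr hz
        · rintro (hz | hz)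
          · by_cases hzy : z = y
            · exact Or.inr (by simp [hzy])
            · exact Or.inl ⟨⟨hz.1, by simp [hzy]⟩, hz.2⟩
          · exact Or.inr hz
      have hBT : B ∪ {y} = (K ∩ v) ∪ {y} := by
        ext z
        constructor
        · rintro (hz | hz)
          · exact Or.inl ⟨hz.1.1, hz.2⟩
          · exact Or.inr hz
        · rintro (hz | hz)
          · by_cases hzy : z = y
            · exact Or.inr (by simp [hzy])
            · exact Or.inl ⟨⟨hz.1, by simp [hzy]⟩, hz.2⟩
          · exact Or.inr hz
      have hATclosed : IsClosed (A ∪ {y}) := by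
        rw [hAT]; exact (hK.isClosed.inter hu).union isClosed_singleton
      have hBTclosed : IsClosed (B ∪ {y}) := by
        rw [hBT]; exact (hK.isClosed.inter hv).union isClosed_singleton
      have hKA : K \ A = B ∪ {y} := by
        ext z
        constructor
        · rintro ⟨hzK, hzA⟩
          by_cases hzy : z = y
          · exact Or.inr (by simp [hzy])
          · have hzKy : z ∈ K \ {y} := ⟨hzK, by simp [hzy]⟩
            rw [← hAB] at hzKy
            rcases hzKy with hz | hz
            · exact absurd hz hzA
            · exact Or.inl hz
        · rintro (hz | hz)
          · refine ⟨hz.1.1, fun hzA => ?_⟩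
            have : z ∈ A ∩ B := ⟨hzA, hz⟩
            rw [hABdisj] at this; exact this
          · simp only [mem_singleton_iff] at hz; subst hz
            exact ⟨hy.1, fun hzA => hzA.1.2 rfl⟩
      have hKB : K \ B = A ∪ {y} := by
        ext z
        constructor
        · rintro ⟨hzK, hzB⟩
          by_cases hzy : z = y
          · exact Or.inr (by simp [hzy])
          · have hzKy : z ∈ K \ {y} := ⟨hzK, by simp [hzy]⟩
            rw [← hAB] at hzKy
            rcases hzKy with hz | hz
            · exact Or.inl hz
            · exact absurd hz hzB
        · rintro (hz | hz)
          · refine ⟨hz.1.1, fun hzB => ?_⟩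
            have : z ∈ A ∩ B := ⟨hz, hzB⟩
            rw [hABdisj] at this; exact this
          · simp only [mem_singleton_iff] at hz; subst hz
            exact ⟨hy.1, fun hzB => hzB.1.2 rfl⟩
      by_cases hsA : s ∈ A
      · refine ⟨B, fun _ _ => ⟨⟨hy.1, hBne, fun z hz => hz.1, hBTclosed, by rw [hKB]; exact hATclosed⟩, ?_⟩⟩
        intro hsB
        have : s ∈ A ∩ B := ⟨hsA, hsB⟩
        rw [hABdisj] at this; exact this
      · exact ⟨A, fun _ _ => ⟨⟨hy.1, hAne, fun z hz => hz.1, hATclosed, by rw [hKA]; exact hBTclosed⟩, hsA⟩⟩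
    · exact ⟨∅, fun h1 h2 => absurd ⟨h1, h2⟩ hy⟩
  choose Sf hSf using hmk
  set 𝒯 : Set (Set X) := {T | ∃ y : X, y ∈ K ∧ y ≠ s ∧ T = Sf y ∪ {y}} with h𝒯
  have hTgood : ∀ y : X, y ∈ K → y ≠ s → GoodSide K y (Sf y) ∧ s ∉ Sf y := fun y h1 h2 => hSf y h1 h2
  have hTsubK : ∀ T ∈ 𝒯, T ⊆ K := by
    rintro T ⟨y, hyK, hys, rfl⟩
    apply Set.union_subset (fun z hz => ((hTgood y hyK hys).1.2.2.1 hz).1)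
    intro z hz; simp only [mem_singleton_iff] at hz; subst hz; exact hyK
  have hTclosed : ∀ T ∈ 𝒯, IsClosed T := by
    rintro T ⟨y, hyK, hys, rfl⟩
    exact (hTgood y hyK hys).1.2.2.2.1
  have hTne : ∀ T ∈ 𝒯, T.Nonempty := by
    rintro T ⟨y, hyK, hys, rfl⟩
    exact ⟨y, Or.inr rfl⟩
  have hsT : ∀ T ∈ 𝒯, s ∉ T := by
    rintro T ⟨y, hyK, hys, rfl⟩
    rintro (hz | hz)
    · exact (hTgood y hyK hys).2 hz
    · simp only [mem_singleton_iff] at hz; exact hys hz.symm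
  -- the key nesting property
  have hkey : ∀ (y : X), y ∈ K → y ≠ s → ∀ (z : X), z ∈ Sf y →
      Sf z ∪ {z} ⊆ Sf y := by
    intro y hyK hys z hz
    have hzK : z ∈ K := ((hTgood y hyK hys).1.2.2.1 hz).1
    have hzs : z ≠ s := by rintro rfl; exact (hTgood y hyK hys).2 hz
    exact goodSide_nested hKc hs (hTgood y hyK hys).1 (hTgood y hyK hys).2
      (hTgood z hzK hzs).1 (hTgood z hzK hzs).2 hz
  have h𝒯ne : (Sf t ∪ {t}) ∈ 𝒯 := ⟨t, ht, hst, rfl⟩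
  have hbound : ∀ c ⊆ 𝒯, IsChain (· ⊆ ·) c → ∃ lb ∈ 𝒯, ∀ T ∈ c, lb ⊆ T := by
    intro c hc hchain
    rcases Set.eq_empty_or_nonempty c with rfl | hcne
    · exact ⟨Sf t ∪ {t}, h𝒯ne, by simp⟩
    · have hcompact : ∀ T ∈ c, IsCompact T := fun T hT =>
        hK.of_isClosed_subset (hTclosed T (hc hT)) (hTsubK T (hc hT))
      have hdir : Directed (fun x1 x2 : Set X => x1 ⊇ x2) (fun T : c => (T : Set X)) := by
        rintro ⟨T₁, h₁⟩ ⟨T₂, h₂⟩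
        rcases eq_or_ne T₁ T₂ with rfl | hne
        · exact ⟨⟨T₁, h₁⟩, le_refl _, le_refl _⟩
        · rcases hchain h₁ h₂ hne with h | h
          · exact ⟨⟨T₁, h₁⟩, le_refl _, h⟩
          · exact ⟨⟨T₂, h₂⟩, h, le_refl _⟩
      have : Nonempty c := hcne.to_subtype
      have hMne : (⋂ T : c, (T : Set X)).Nonempty :=
        IsCompact.nonempty_iInter_of_directed_nonempty_isCompact_isClosed _ hdir
          (fun T => hTne T (hc T.2)) (fun T => hcompact T T.2)
          (fun T => hTclosed T (hc T.2))
      obtain ⟨y₁, hy₁⟩ := hMne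
      simp only [Set.mem_iInter] at hy₁
      obtain ⟨T₀, hT₀⟩ := hcne
      have hy₁K : y₁ ∈ K := hTsubK T₀ (hc hT₀) (hy₁ ⟨T₀, hT₀⟩)
      have hy₁s : y₁ ≠ s := by
        rintro rfl
        exact hsT T₀ (hc hT₀) (hy₁ ⟨T₀, hT₀⟩)
      refine ⟨Sf y₁ ∪ {y₁}, ⟨y₁, hy₁K, hy₁s, rfl⟩, ?_⟩
      intro T hT
      obtain ⟨y, hyK, hys, rfl⟩ := hc hT
      have hy₁T : y₁ ∈ Sf y ∪ {y} := hy₁ ⟨_, hT⟩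
      rcases hy₁T with hh | hh
      · exact (hkey y hyK hys y₁ hh).trans subset_union_left
      · simp only [mem_singleton_iff] at hh
        subst hh
        exact le_refl _
  obtain ⟨m, hm⟩ := zorn_superset 𝒯 hbound
  obtain ⟨y₀, hy₀K, hy₀s, rfl⟩ := hm.1
  obtain ⟨z, hz⟩ := (hTgood y₀ hy₀K hy₀s).1.2.1
  have hzK : z ∈ K := ((hTgood y₀ hy₀K hy₀s).1.2.2.1 hz).1
  have hzs : z ≠ s := by rintro rfl; exact (hTgood y₀ hy₀K hy₀s).2 hz
  have hsub : Sf z ∪ {z} ⊆ Sf y₀ := hkey y₀ hy₀K hy₀s z hz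
  have hsub' : Sf z ∪ {z} ⊆ Sf y₀ ∪ {y₀} := hsub.trans subset_union_left
  have hmem : Sf z ∪ {z} ∈ 𝒯 := ⟨z, hzK, hzs, rfl⟩
  have heq := hm.2 hmem hsub'
  have hy₀mem : y₀ ∈ Sf z ∪ {z} := heq (Or.inr rfl)
  have : y₀ ∈ Sf y₀ := hsub hy₀mem
  exact (hTgood y₀ hy₀K hy₀s).1.not_mem this

end NonCut


/-! ### Density of cut points -/

section CutPoints

variable {X : Type*} [TopologicalSpace X] [IsTree X]

lemma subarc_mid {a b : X} {γ : ℝ → X}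
    (hc : ContinuousOn γ (Icc 0 1)) (hi : InjOn γ (Icc 0 1))
    (h0 : γ 0 = a) (h1 : γ 1 = b) (himg : γ '' Icc 0 1 = arc a b) {t₁ t₂ : ℝ}
    (ht₁ : t₁ ∈ Icc (0:ℝ) 1) (ht₂ : t₂ ∈ Icc (0:ℝ) 1) (h12 : t₁ ≤ t₂) :
    γ '' Icc t₁ t₂ = arc (γ t₁) (γ t₂) := by
  have hc₁b : γ '' Icc t₁ 1 = arc (γ t₁) b := subarc_right hc hi h0 h1 himg ht₁
  have hc₂b : γ '' Icc t₂ 1 = arc (γ t₂) b := subarc_right hc hi h0 h1 himg ht₂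
  have hmem : γ t₂ ∈ arc (γ t₁) b := by
    rw [← hc₁b]; exact ⟨t₂, ⟨h12, ht₂.2⟩, rfl⟩
  have hsplit := arc_union_of_mem hmem
  have hinter := arc_inter_of_mem hmem
  -- arc (γ t₁) (γ t₂) = (arc (γ t₁) b \ arc (γ t₂) b) ∪ {γ t₂}
  apply Set.Subset.antisymm
  · rintro x ⟨r, hr, rfl⟩
    have hrx : γ r ∈ arc (γ t₁) b := by
      rw [← hc₁b]; exact ⟨r, ⟨hr.1, le_trans hr.2 ht₂.2⟩, rfl⟩
    rw [← hsplit] at hrx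
    rcases hrx with hx | hx
    · exact hx
    · -- γ r ∈ arc (γ t₂) b = γ '' Icc t₂ 1: r ∈ both pieces → r = t₂ → endpoint
      rw [← hc₂b] at hx
      obtain ⟨r', hr', heq⟩ := hx
      have hrr : r' = r := hi ⟨le_trans ht₂.1 hr'.1, hr'.2⟩ ⟨le_trans ht₁.1 hr.1, le_trans hr.2 ht₂.2⟩ heq
      subst hrr
      have : r' = t₂ := le_antisymm hr.2 hr'.1
      subst this
      exact right_mem_arc _ _
  · intro x hx
    have hx1 : x ∈ arc (γ t₁) b := arc_subset_left hmem hx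
    rw [← hc₁b] at hx1
    obtain ⟨r, hr, rfl⟩ := hx1
    refine ⟨r, ⟨hr.1, ?_⟩, rfl⟩
    by_contra hlt
    push_neg at hlt
    -- r > t₂ : γ r ∈ arc (γ t₂) b as well, so γ r ∈ inter = {γ t₂} : r = t₂ contra
    have hx2 : γ r ∈ arc (γ t₂) b := by
      rw [← hc₂b]; exact ⟨r, ⟨le_of_lt hlt, hr.2⟩, rfl⟩
    have : γ r ∈ arc (γ t₁) (γ t₂) ∩ arc (γ t₂) b := ⟨hx, hx2⟩
    rw [hinter] at this
    simp only [mem_singleton_iff] at this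
    have := hi ⟨le_trans ht₁.1 hr.1, hr.2⟩ ⟨le_trans ht₁.1 h12, ht₂.2⟩ this
    rw [this] at hlt
    exact lt_irrefl _ hlt

lemma closure_ccIn_compl {s d : X} (hd : d ≠ s) :
    closure (connectedComponentIn ({s}ᶜ : Set X) d) =
      connectedComponentIn ({s}ᶜ : Set X) d ∪ {s} := by
  apply Set.Subset.antisymm
  · intro x hx
    by_cases hxs : x = s
    · exact Or.inr (by simp [hxs])
    · exact Or.inl (closure_ccIn_subset d ⟨hx, by simpa using hxs⟩)
  · apply Set.union_subset subset_closure
    intro x hx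
    simp only [mem_singleton_iff] at hx; subst hx
    exact mem_closure_ccIn_compl hd

/-- Every component of the complement of a point contains a vertex. -/
lemma exists_vtx_in_ccIn {s d : X} (hd : d ≠ s) :
    ∃ y ∈ connectedComponentIn ({s}ᶜ : Set X) d, y ∈ Vtx X := by
  set D := connectedComponentIn ({s}ᶜ : Set X) d with hD
  have hdD : d ∈ D := mem_connectedComponentIn (by simpa using hd)
  have hsD : s ∉ D := fun hs => (connectedComponentIn_subset _ _ hs) rfl
  have hDcl : closure D = D ∪ {s} := closure_ccIn_compl hd
  set K := D ∪ {s} with hK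
  have hKclosed : IsClosed K := by rw [← hDcl]; exact isClosed_closure
  have hKcompact : IsCompact K := hKclosed.isCompact
  have hKconn : IsPreconnected K := by
    rw [← hDcl]; exact isPreconnected_connectedComponentIn.closure
  have hsK : s ∈ K := Or.inr rfl
  have hdK : d ∈ K := Or.inl hdD
  obtain ⟨y, hyK, hys, hyc⟩ := exists_noncut hKcompact hKconn hsK hdK hd
  have hyD : y ∈ D := by
    rcases hyK with hy | hy
    · exact hy
    · simp only [mem_singleton_iff] at hy; exact absurd hy hys
  refine ⟨y, hyD, ?_⟩
  -- X \ {y} is preconnected: it is (X \ D) ∪ (K \ {y}), glued at s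
  have hXD : IsPreconnected (Dᶜ : Set X) := by
    apply isPreconnected_of_forall s
    intro w hw
    by_cases hws : w = s
    · exact ⟨{s}, by simpa using hsD, by simp [hws], by simp [hws], isPreconnected_singleton⟩
    · set Dw := connectedComponentIn ({s}ᶜ : Set X) w with hDw
      have hwDw : w ∈ Dw := mem_connectedComponentIn (by simpa using hws)
      have hdisj : Dw ∩ D = ∅ := by
        ext x
        simp only [mem_inter_iff, mem_empty_iff_false, iff_false, not_and]
        intro hx1 hx2
        have h1 : Dw = connectedComponentIn ({s}ᶜ : Set X) x := connectedComponentIn_eq hx1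
        have h2 : D = connectedComponentIn ({s}ᶜ : Set X) x := connectedComponentIn_eq hx2
        rw [← h2] at h1
        rw [h1] at hwDw
        exact hw hwDw
      refine ⟨Dw ∪ {s}, ?_, Or.inr rfl, Or.inl hwDw, ?_⟩
      · apply Set.union_subset
        · intro x hx
          intro hxD
          have : x ∈ Dw ∩ D := ⟨hx, hxD⟩
          rw [hdisj] at this; exact this
        · intro x hx
          simp only [mem_singleton_iff] at hx; subst hx
          exact hsD
      · rw [← closure_ccIn_compl hws]
        exact isPreconnected_connectedComponentIn.closure
  have hKy : IsPreconnected (K \ {y}) := hyc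
  have hsKy : s ∈ K \ {y} := ⟨hsK, by simpa using fun h => hys h.symm⟩
  have hcup : IsPreconnected (Dᶜ ∪ (K \ {y})) :=
    IsPreconnected.union s hsD hsKy hXD hKy
  have hid : ({y}ᶜ : Set X) = Dᶜ ∪ (K \ {y}) := by
    ext z
    simp only [mem_compl_iff, mem_singleton_iff, mem_union, mem_diff]
    constructor
    · intro hz
      by_cases hzD : z ∈ D
      · exact Or.inr ⟨Or.inl hzD, hz⟩
      · exact Or.inl hzD
    · rintro (hz | hz)
      · intro he; subst he; exact hz hyD
      · exact hz.2
  have hne : ({y}ᶜ : Set X).Nonempty := ⟨s, by simpa using fun h => hys h.symm⟩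
  apply mem_vtx_of_noncut hne
  rw [hid]
  exact hcup

/-- Core density theorem: every nondegenerate arc contains a cut point of its endpoints. -/
theorem exists_cut {a b : X} (hab : a ≠ b) : ∃ s ∈ arc a b, Cuts s a b := by
  by_contra hno
  push_neg at hno
  obtain ⟨γ, hc, hi, h0, h1, himg⟩ := arc_param hab
  have hIoo : Ioo (0:ℝ) 1 ⊆ Icc (0:ℝ) 1 := Ioo_subset_Icc_self
  -- parameters of interior points that are not vertices
  set U : Set ℝ := {t ∈ Ioo (0:ℝ) 1 | γ t ∉ Vtx X} with hU
  have hbadfin : (Icc (0:ℝ) 1 ∩ γ ⁻¹' (Vtx X)).Finite := by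
    apply Set.Finite.of_finite_image (f := γ)
    · apply Set.Finite.subset vtx_finite
      rintro x ⟨r, hr, rfl⟩
      exact hr.2
    · exact hi.mono inter_subset_left
  have hUinf : U.Infinite := by
    have h1' : (Ioo (0:ℝ) 1).Infinite := by
      rw [← Set.infinite_coe_iff]
      exact Set.Ioo.infinite (by norm_num)
    apply Set.Infinite.mono _ (h1'.diff hbadfin)
    rintro t ⟨ht, htb⟩
    refine ⟨ht, fun hv => htb ⟨hIoo ht, hv⟩⟩
  -- basic facts for t ∈ U
  have hne_a : ∀ t ∈ Ioo (0:ℝ) 1, γ t ≠ a := by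
    intro t ht he
    rw [← h0] at he
    have := hi (hIoo ht) (by norm_num) he
    exact (ne_of_gt ht.1) this
  have hne_b : ∀ t ∈ Ioo (0:ℝ) 1, γ t ≠ b := by
    intro t ht he
    rw [← h1] at he
    have := hi (hIoo ht) (by norm_num) he
    exact (ne_of_lt ht.2) this
  have hmem_arc : ∀ t ∈ Icc (0:ℝ) 1, γ t ∈ arc a b := by
    intro t ht; rw [← himg]; exact ⟨t, ht, rfl⟩
  have hbC : ∀ t ∈ Ioo (0:ℝ) 1, b ∈ connectedComponentIn ({γ t}ᶜ : Set X) a := by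
    intro t ht
    have hnc := hno (γ t) (hmem_arc t (hIoo ht))
    rw [cuts_iff (hne_a t ht) (hne_b t ht)] at hnc
    exact not_not.mp hnc
  -- every other point of the arc lies in the component of the endpoints
  have harcside : ∀ t ∈ Ioo (0:ℝ) 1, ∀ r ∈ Icc (0:ℝ) 1, r ≠ t →
      γ r ∈ connectedComponentIn ({γ t}ᶜ : Set X) a := by
    intro t ht r hr hrt
    rcases lt_or_gt_of_ne hrt with hlt | hgt
    · -- left piece
      have hpre : IsPreconnected (γ '' Ico 0 t) :=
        isPreconnected_Ico.image γ (hc.mono (Icc_subset_Icc le_rfl ht.2.le |>.trans' Ico_subset_Icc_self))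
      have hsubF : γ '' Ico 0 t ⊆ ({γ t}ᶜ : Set X) := by
        rintro x ⟨w, hw, rfl⟩
        simp only [mem_compl_singleton_iff]
        intro he
        have := hi ⟨hw.1, le_trans hw.2.le ht.2.le⟩ (hIoo ht) he
        rw [this] at hw
        exact lt_irrefl _ hw.2
      have haa : a ∈ γ '' Ico 0 t := ⟨0, ⟨le_rfl, ht.1⟩, h0⟩
      exact hpre.subset_connectedComponentIn haa hsubF ⟨r, ⟨hr.1, hlt⟩, rfl⟩
    · -- right piece, through b
      have hpre : IsPreconnected (γ '' Ioc t 1) :=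
        isPreconnected_Ioc.image γ (hc.mono (fun w hw => ⟨le_trans ht.1.le hw.1.le, hw.2⟩))
      have hsubF : γ '' Ioc t 1 ⊆ ({γ t}ᶜ : Set X) := by
        rintro x ⟨w, hw, rfl⟩
        simp only [mem_compl_singleton_iff]
        intro he
        have := hi ⟨le_trans ht.1.le hw.1.le, hw.2⟩ (hIoo ht) he
        rw [this] at hw
        exact lt_irrefl _ hw.1
      have hbb : b ∈ γ '' Ioc t 1 := ⟨1, ⟨ht.2, le_rfl⟩, h1⟩
      have hsub := hpre.subset_connectedComponentIn hbb hsubF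
      rw [← connectedComponentIn_eq (hbC t ht)] at hsub
      exact hsub ⟨r, ⟨hgt, hr.2⟩, rfl⟩
  -- choose a vertex in a branch component at each t ∈ U
  have hsel : ∀ t : ℝ, ∃ y : X, t ∈ U → y ∈ Vtx X ∧ ∃ d : X, d ≠ γ t ∧
      y ∈ connectedComponentIn ({γ t}ᶜ : Set X) d ∧
      connectedComponentIn ({γ t}ᶜ : Set X) d ∩ connectedComponentIn ({γ t}ᶜ : Set X) a = ∅ := by
    intro t
    by_cases htU : t ∈ U
    · have h2 : numComponents ({γ t}ᶜ : Set X) = 2 := not_not.mp htU.2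
      obtain ⟨d, hds, hdisj, hcov⟩ := exists_other_component h2 (fun he => hne_a t htU.1 he.symm)
      obtain ⟨y, hyD, hyV⟩ := exists_vtx_in_ccIn hds
      exact ⟨y, fun _ => ⟨hyV, d, hds, hyD, hdisj⟩⟩
    · exact ⟨a, fun h => absurd h htU⟩
  choose yf hyf using hsel
  -- yf is injective on U
  have hinj : InjOn yf U := by
    intro t ht t' ht' heq
    by_contra htt
    obtain ⟨hyV, d, hds, hyD, hdisj⟩ := hyf t ht
    obtain ⟨hyV', d', hds', hyD', hdisj'⟩ := hyf t' ht'
    rw [heq] at hyD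
    set y := yf t' with hy
    set s := γ t with hs
    set s' := γ t' with hs'
    have hss : s ≠ s' := by
      intro he
      exact htt (hi (hIoo ht.1) (hIoo ht'.1) he)
    -- s' ∉ D(t), s ∉ D(t')
    have hs'C : s' ∈ connectedComponentIn ({s}ᶜ : Set X) a :=
      harcside t ht.1 t' (hIoo ht'.1) (fun he => htt he.symm)
    have hsC' : s ∈ connectedComponentIn ({s'}ᶜ : Set X) a :=
      harcside t' ht'.1 t (hIoo ht.1) htt
    have hs'D : s' ∉ connectedComponentIn ({s}ᶜ : Set X) d := by
      intro hmem
      have : s' ∈ connectedComponentIn ({s}ᶜ : Set X) d ∩ connectedComponentIn ({s}ᶜ : Set X) a :=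
        ⟨hmem, hs'C⟩
      rw [hdisj] at this; exact this
    have hsD' : s ∉ connectedComponentIn ({s'}ᶜ : Set X) d' := by
      intro hmem
      have : s ∈ connectedComponentIn ({s'}ᶜ : Set X) d' ∩ connectedComponentIn ({s'}ᶜ : Set X) a :=
        ⟨hmem, hsC'⟩
      rw [hdisj'] at this; exact this
    -- D(t') ⊆ D(t) and vice versa
    have hDt'_eq : connectedComponentIn ({s'}ᶜ : Set X) d' = connectedComponentIn ({s'}ᶜ : Set X) y :=
      connectedComponentIn_eq hyD'
    have hDt_eq : connectedComponentIn ({s}ᶜ : Set X) d = connectedComponentIn ({s}ᶜ : Set X) y :=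
      connectedComponentIn_eq hyD
    have hsub1 : connectedComponentIn ({s'}ᶜ : Set X) d' ⊆ connectedComponentIn ({s}ᶜ : Set X) d := by
      rw [hDt_eq]
      apply IsPreconnected.subset_connectedComponentIn isPreconnected_connectedComponentIn hyD'
      intro w hw
      simp only [mem_compl_singleton_iff]
      rintro rfl
      exact hsD' hw
    have hsub2 : connectedComponentIn ({s}ᶜ : Set X) d ⊆ connectedComponentIn ({s'}ᶜ : Set X) d' := by
      rw [hDt'_eq]
      apply IsPreconnected.subset_connectedComponentIn isPreconnected_connectedComponentIn hyD
      intro w hw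
      simp only [mem_compl_singleton_iff]
      rintro rfl
      exact hs'D hw
    have hDeq : connectedComponentIn ({s}ᶜ : Set X) d = connectedComponentIn ({s'}ᶜ : Set X) d' :=
      Set.Subset.antisymm hsub2 hsub1
    have hcl1 := closure_ccIn_compl hds
    have hcl2 := closure_ccIn_compl hds'
    rw [hDeq, hcl2] at hcl1
    have hsmem : s ∈ connectedComponentIn ({s'}ᶜ : Set X) d' ∪ {s} := Or.inr rfl
    rw [← hcl1] at hsmem
    rcases hsmem with hsm | hsm
    · exact hsD' hsm
    · simp only [mem_singleton_iff] at hsm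
      exact hss hsm
  have : (Vtx X).Infinite := by
    apply Set.Infinite.mono _ (hUinf.image hinj)
    rintro x ⟨t, ht, rfl⟩
    exact (hyf t ht).1
  exact this vtx_finite

/-- The arc between two points of a connected set lies in its closure. -/
lemma arc_subset_closure_preconn {T : Set X} (hT : IsPreconnected T) {x y : X}
    (hx : x ∈ T) (hy : y ∈ T) : arc x y ⊆ closure T := by
  by_cases hxy : x = y
  · subst hxy
    rw [arc_self]
    simpa using subset_closure hx
  · obtain ⟨γ, hc, hi, h0, h1, himg⟩ := arc_param hxy
    intro p hp
    by_contra hpc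
    rw [← himg] at hp
    obtain ⟨r, hr, rfl⟩ := hp
    have hr0 : r ≠ 0 := by
      rintro rfl
      exact hpc (subset_closure (h0 ▸ hx))
    have hr1 : r ≠ 1 := by
      rintro rfl
      exact hpc (subset_closure (h1 ▸ hy))
    have hrI : r ∈ Ioo (0:ℝ) 1 := ⟨lt_of_le_of_ne hr.1 (Ne.symm hr0), lt_of_le_of_ne hr.2 hr1⟩
    have hcw : ContinuousWithinAt γ (Icc 0 1) r := hc r hr
    have hU : (closure T)ᶜ ∈ nhds (γ r) := (isClosed_closure.isOpen_compl).mem_nhds hpc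
    have hpre : γ ⁻¹' (closure T)ᶜ ∈ nhdsWithin r (Icc 0 1) := hcw hU
    rw [mem_nhdsWithin] at hpre
    obtain ⟨V, hVopen, hrV, hVsub⟩ := hpre
    obtain ⟨ε, hε, hball⟩ := Metric.isOpen_iff.mp hVopen r hrV
    set t₁ := max 0 (r - ε/2) with ht₁def
    set t₂ := min 1 (r + ε/2) with ht₂def
    have ht₁r : t₁ < r := max_lt hrI.1 (by linarith)
    have hrt₂ : r < t₂ := lt_min hrI.2 (by linarith)
    have ht₁I : t₁ ∈ Icc (0:ℝ) 1 := ⟨le_max_left _ _, le_trans ht₁r.le hr.2⟩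
    have ht₂I : t₂ ∈ Icc (0:ℝ) 1 := ⟨le_trans hr.1 hrt₂.le, min_le_left _ _⟩
    have hsubV : Icc t₁ t₂ ⊆ V ∩ Icc 0 1 := by
      intro w hw
      constructor
      · apply hball
        rw [Real.ball_eq_Ioo]
        constructor
        · calc r - ε < r - ε/2 := by linarith
            _ ≤ t₁ := le_max_right _ _
            _ ≤ w := hw.1
        · calc w ≤ t₂ := hw.2
            _ ≤ r + ε/2 := min_le_right _ _
            _ < r + ε := by linarith
      · exact ⟨le_trans ht₁I.1 hw.1, le_trans hw.2 ht₂I.2⟩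
    have huv' : γ t₁ ≠ γ t₂ := by
      intro he
      have := hi ht₁I ht₂I he
      rw [this] at ht₁r
      exact lt_irrefl _ (lt_trans ht₁r hrt₂)
    obtain ⟨s, hsarc, hcut⟩ := exists_cut huv'
    rw [← subarc_mid hc hi h0 h1 himg ht₁I ht₂I (le_trans ht₁r.le hrt₂.le)] at hsarc
    obtain ⟨w, hw, rfl⟩ := hsarc
    have hwI : w ∈ Icc (0:ℝ) 1 := ⟨le_trans ht₁I.1 hw.1, le_trans hw.2 ht₂I.2⟩
    have hsT : γ w ∉ closure T := hVsub (hsubV hw)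
    -- extended connected set
    have hmem0 : x ∈ γ '' Icc 0 t₁ := ⟨0, ⟨le_rfl, ht₁I.1⟩, h0⟩
    have hmem1 : y ∈ γ '' Icc t₂ 1 := ⟨1, ⟨ht₂I.2, le_rfl⟩, h1⟩
    have hpre1 : IsPreconnected (T ∪ γ '' Icc 0 t₁) := by
      apply IsPreconnected.union x hx hmem0 hT
      exact isPreconnected_Icc.image γ (hc.mono (Icc_subset_Icc le_rfl ht₁I.2))
    have hpre2 : IsPreconnected ((T ∪ γ '' Icc 0 t₁) ∪ γ '' Icc t₂ 1) := by
      apply IsPreconnected.union y (Or.inl hy) hmem1 hpre1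
      exact isPreconnected_Icc.image γ (hc.mono (Icc_subset_Icc ht₂I.1 le_rfl))
    have hu'm : γ t₁ ∈ (T ∪ γ '' Icc 0 t₁) ∪ γ '' Icc t₂ 1 :=
      Or.inl (Or.inr ⟨t₁, ⟨ht₁I.1, le_rfl⟩, rfl⟩)
    have hv'm : γ t₂ ∈ (T ∪ γ '' Icc 0 t₁) ∪ γ '' Icc t₂ 1 :=
      Or.inr ⟨t₂, ⟨le_rfl, ht₂I.2⟩, rfl⟩
    have hsmem := hcut.2.2 _ hpre2 hu'm hv'm
    rcases hsmem with (hsm | hsm) | hsm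
    · exact hsT (subset_closure hsm)
    · obtain ⟨w', hw', heq⟩ := hsm
      have : w' = w := hi ⟨hw'.1, le_trans hw'.2 ht₁I.2⟩ hwI heq
      subst this
      have : w' = t₁ := le_antisymm hw'.2 hw.1
      subst this
      exact hcut.1 rfl
    · obtain ⟨w', hw', heq⟩ := hsm
      have : w' = w := hi ⟨le_trans ht₂I.1 hw'.1, hw'.2⟩ hwI heq
      subst this
      have : w' = t₂ := le_antisymm hw.2 hw'.1
      subst this
      exact hcut.2.1 rfl

/-- The full cut-point lemma: interior points of arcs separate the endpoints. -/
theorem cuts_of_mem_arc {q q' m : X} (hm : m ∈ arc q q') (h1 : m ≠ q) (h2 : m ≠ q') :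
    Cuts m q q' := by
  refine ⟨h1, h2, ?_⟩
  intro T₀ hT₀ hq hq'
  by_contra hmT
  set C := connectedComponentIn ({m}ᶜ : Set X) q with hC
  have hqC : q ∈ C := mem_connectedComponentIn (by simpa using h1.symm)
  have hq'C : q' ∈ C := by
    apply hT₀.subset_connectedComponentIn hq _ hq'
    intro w hw
    simp only [mem_compl_singleton_iff]
    rintro rfl
    exact hmT hw
  have hopen : ∀ w₀ ∈ C, ∃ N : Set X, IsOpen N ∧ w₀ ∈ N ∧ N ⊆ C ∧ ∀ w ∈ N, m ∉ arc w₀ w := by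
    intro w₀ hw₀
    have hw₀m : w₀ ≠ m := by
      rintro rfl
      exact (connectedComponentIn_subset _ _ hw₀) rfl
    obtain ⟨V, V', hV, hV', hwV, hmV', hdis⟩ := t2_separation hw₀m
    set N := connectedComponentIn V w₀ with hN
    have hNopen := isOpen_ccIn hV w₀
    have hNmem : w₀ ∈ N := mem_connectedComponentIn hwV
    have hNm : N ⊆ ({m}ᶜ : Set X) := by
      intro z hz
      simp only [mem_compl_singleton_iff]
      rintro rfl
      exact (Set.disjoint_left.mp hdis (connectedComponentIn_subset _ _ hz)) hmV'
    have hNsubC : N ⊆ C := by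
      have hsub := isPreconnected_connectedComponentIn.subset_connectedComponentIn hNmem hNm
      rwa [← connectedComponentIn_eq hw₀] at hsub
    refine ⟨N, hNopen, hNmem, hNsubC, ?_⟩
    intro w hw hmarc
    have harc : arc w₀ w ⊆ closure N :=
      arc_subset_closure_preconn isPreconnected_connectedComponentIn hNmem hw
    have hmcl : m ∈ closure V := closure_mono (connectedComponentIn_subset _ _) (harc hmarc)
    have hVc : closure V ⊆ V'ᶜ :=
      closure_minimal (fun z hz hz' => Set.disjoint_left.mp hdis hz hz') hV'.isClosed_compl
    exact hVc hmcl hmV'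
  set W : Set X := {w | w ∈ C ∧ m ∉ arc q w} with hW
  set W' : Set X := {w | w ∈ C ∧ m ∈ arc q w} with hW'
  have hWopen : IsOpen W := by
    rw [isOpen_iff_forall_mem_open]
    intro w₀ hw₀
    obtain ⟨N, hNo, hNm, hNC, hNarc⟩ := hopen w₀ hw₀.1
    refine ⟨N, ?_, hNo, hNm⟩
    intro w hw
    refine ⟨hNC hw, fun hmw => ?_⟩
    rcases arc_triangle q w₀ w hmw with hh | hh
    · exact hw₀.2 hh
    · exact hNarc w hw hh
  have hW'open : IsOpen W' := by
    rw [isOpen_iff_forall_mem_open]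
    intro w₀ hw₀
    obtain ⟨N, hNo, hNm, hNC, hNarc⟩ := hopen w₀ hw₀.1
    refine ⟨N, ?_, hNo, hNm⟩
    intro w hw
    refine ⟨hNC hw, ?_⟩
    by_contra hmw
    rcases arc_triangle q w w₀ hw₀.2 with hh | hh
    · exact hmw hh
    · rw [arc_comm] at hh
      exact hNarc w hw hh
  have hCsub : C ⊆ W ∪ W' := by
    intro w hw
    by_cases hmw : m ∈ arc q w
    · exact Or.inr ⟨hw, hmw⟩
    · exact Or.inl ⟨hw, hmw⟩
  have hqW : q ∈ W := by
    rw [hW, mem_setOf_eq]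
    refine ⟨hqC, ?_⟩
    rw [arc_self]
    simpa using h1
  have hq'W' : q' ∈ W' := by
    rw [hW', mem_setOf_eq]
    exact ⟨hq'C, hm⟩
  have hCW : (C ∩ W).Nonempty := ⟨q, hqC, hqW⟩
  have hCW' : (C ∩ W').Nonempty := ⟨q', hq'C, hq'W'⟩
  obtain ⟨x, -, hx1, hx2⟩ :=
    isPreconnected_connectedComponentIn (F := ({m}ᶜ : Set X)) (x := q) W W' hWopen hW'open
      hCsub hCW hCW'
  exact hx1.2 hx2.2

/-- The arc between two points of a connected set lies in the set. -/
lemma arc_subset_preconn {T : Set X} (hT : IsPreconnected T) {x y : X}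
    (hx : x ∈ T) (hy : y ∈ T) : arc x y ⊆ T := by
  intro p hp
  by_cases hpx : p = x
  · subst hpx; exact hx
  · by_cases hpy : p = y
    · subst hpy; exact hy
    · exact (cuts_of_mem_arc hp hpx hpy).2.2 T hT hx hy

/-- Betweenness is a closed relation. -/
lemma isClosed_betw (a0 : X) : IsClosed {p : X × X | p.1 ∈ arc a0 p.2} := by
  rw [← isOpen_compl_iff, isOpen_iff_forall_mem_open]
  rintro ⟨v, w⟩ hvw
  simp only [mem_compl_iff, mem_setOf_eq] at hvw
  have hva : v ≠ a0 := by rintro rfl; exact hvw (left_mem_arc _ _)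
  obtain ⟨j, hmeet, hjv, hjw⟩ := arc_meet a0 v w
  have hjv' : j ≠ v := by rintro rfl; exact hvw hjw
  obtain ⟨z, hz, hzj, hzv⟩ := arc_mid hjv'
  have hzav : z ∈ arc a0 v := arc_subset_right hjv hz
  have hza0 : z ≠ a0 := by
    intro he
    have h' : z ∈ arc a0 j ∩ arc j v := ⟨by rw [he]; exact left_mem_arc a0 j, hz⟩
    rw [arc_inter_of_mem hjv] at h'
    exact hzj (by simpa using h')
  have hcut : Cuts z a0 v := cuts_of_mem_arc hzav hza0 hzv
  set Cv := connectedComponentIn ({z}ᶜ : Set X) v with hCv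
  set Cj := connectedComponentIn ({z}ᶜ : Set X) a0 with hCj
  have hopenv : IsOpen Cv := isOpen_ccIn (isOpen_compl_singleton (x := z)) v
  have hopenj : IsOpen Cj := isOpen_ccIn (isOpen_compl_singleton (x := z)) a0
  have hvCv : v ∈ Cv := mem_connectedComponentIn (by simpa using fun h => hzv h.symm)
  have ha0Cj : a0 ∈ Cj := mem_connectedComponentIn (by simpa using fun h => hza0 h.symm)
  have hdisj : Cv ∩ Cj = ∅ := by
    ext x
    simp only [mem_inter_iff, mem_empty_iff_false, iff_false, not_and]
    intro hx1 hx2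
    have he1 : Cv = connectedComponentIn ({z}ᶜ : Set X) x := connectedComponentIn_eq hx1
    have he2 : Cj = connectedComponentIn ({z}ᶜ : Set X) x := connectedComponentIn_eq hx2
    have hvCj : v ∈ Cj := by rw [he2, ← he1]; exact hvCv
    have := hcut.2.2 Cj isPreconnected_connectedComponentIn ha0Cj hvCj
    exact (connectedComponentIn_subset _ _ this) rfl
  have hwCj : w ∈ Cj := by
    apply (arc_preconn a0 w).subset_connectedComponentIn (left_mem_arc a0 w) _ (right_mem_arc a0 w)
    intro x hx
    simp only [mem_compl_singleton_iff]
    rintro rfl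
    have hxa : x ∈ arc a0 v ∩ arc a0 w := ⟨hzav, hx⟩
    rw [hmeet] at hxa
    have : x ∈ arc a0 j ∩ arc j v := ⟨hxa, hz⟩
    rw [arc_inter_of_mem hjv] at this
    exact hzj (by simpa using this)
  refine ⟨Cv ×ˢ Cj, ?_, hopenv.prod hopenj, by rw [Set.mem_prod]; exact ⟨hvCv, hwCj⟩⟩
  rintro ⟨v', w'⟩ hp
  rw [Set.mem_prod] at hp
  simp only [mem_compl_iff, mem_setOf_eq]
  intro hmem
  have harc : arc a0 w' ⊆ Cj :=
    arc_subset_preconn isPreconnected_connectedComponentIn ha0Cj hp.2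
  have : v' ∈ Cv ∩ Cj := ⟨hp.1, harc hmem⟩
  rw [hdisj] at this
  exact this

end CutPoints

/-- Lemma 3 of the paper: if `Y` is a subtree of a tree `X` and `f : Y → X` is
continuous with `(a, f a] ∩ Y ≠ ∅` for every `a ∈ Y`, then `f` has a fixed point. -/
theorem stmt4 {X : Type*} [TopologicalSpace X] [IsTree X]
    (Y : Set X) (hYc : IsClosed Y) (hYconn : IsConnected Y)
    (f : Y → X) (hf : Continuous f)
    (h : ∀ (a : Y) (A : Set X), IsArcConn A (a : X) (f a) →
      ((A \ {(a : X)}) ∩ Y).Nonempty) :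
    ∃ z : Y, f z = (z : X) := by
  classical
  obtain ⟨a0, ha0⟩ := hYconn.nonempty
  have hYpre : IsPreconnected Y := hYconn.isPreconnected
  haveI : CompactSpace Y := isCompact_iff_compactSpace.mp hYc.isCompact
  -- the set of points between a0 and their image
  set P : Set X := {x : X | ∃ hx : x ∈ Y, x ∈ arc a0 (f ⟨x, hx⟩)} with hP
  have ha0P : a0 ∈ P := ⟨ha0, left_mem_arc _ _⟩
  -- P is compact (hence closed)
  have hg : Continuous (fun y : Y => ((y : X), f y)) := continuous_subtype_val.prodMk hf
  have hPeq : P = Subtype.val '' ((fun y : Y => ((y : X), f y)) ⁻¹' {p : X × X | p.1 ∈ arc a0 p.2}) := by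
    ext x
    constructor
    · rintro ⟨hx, harc⟩
      exact ⟨⟨x, hx⟩, harc, rfl⟩
    · rintro ⟨⟨x', hx'⟩, hB, rfl⟩
      exact ⟨hx', hB⟩
  have hPcompact : IsCompact P := by
    rw [hPeq]
    exact (((isClosed_betw a0).preimage hg).isCompact).image continuous_subtype_val
  have hPclosed : IsClosed P := hPcompact.isClosed
  have hPY : P ⊆ Y := fun x hx => Exists.choose hx
  -- the cones
  set F : X → Set X := fun x => P ∩ {y : X | x ∈ arc a0 y} with hF
  have hFclosed : ∀ x, IsClosed (F x) := by
    intro x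
    apply hPclosed.inter
    have : {y : X | x ∈ arc a0 y} = (fun y : X => (x, y)) ⁻¹' {p : X × X | p.1 ∈ arc a0 p.2} := rfl
    rw [this]
    exact (isClosed_betw a0).preimage (continuous_const.prodMk continuous_id)
  have hFmem : ∀ x ∈ P, x ∈ F x := fun x hx => ⟨hx, right_mem_arc a0 x⟩
  have hFsub : ∀ {x z : X}, z ∈ F x → F z ⊆ F x := by
    intro x z hz y hy
    exact ⟨hy.1, arc_subset_left hy.2 hz.2⟩
  set 𝒮 : Set (Set X) := {T | ∃ x ∈ P, T = F x} with h𝒮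
  have hbound : ∀ c ⊆ 𝒮, IsChain (· ⊆ ·) c → ∃ lb ∈ 𝒮, ∀ T ∈ c, lb ⊆ T := by
    intro c hc hchain
    rcases Set.eq_empty_or_nonempty c with rfl | hcne
    · exact ⟨F a0, ⟨a0, ha0P, rfl⟩, by simp⟩
    · haveI : Nonempty c := hcne.to_subtype
      have hdir : Directed (fun x1 x2 : Set X => x1 ⊇ x2) (fun T : c => (T : Set X)) := by
        rintro ⟨T₁, h₁⟩ ⟨T₂, h₂⟩
        rcases eq_or_ne T₁ T₂ with rfl | hne
        · exact ⟨⟨T₁, h₁⟩, le_refl _, le_refl _⟩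
        · rcases hchain h₁ h₂ hne with hle | hle
          · exact ⟨⟨T₁, h₁⟩, le_refl _, hle⟩
          · exact ⟨⟨T₂, h₂⟩, hle, le_refl _⟩
      have hMne : (⋂ T : c, (T : Set X)).Nonempty := by
        apply IsCompact.nonempty_iInter_of_directed_nonempty_isCompact_isClosed _ hdir
        · rintro ⟨T, hT⟩
          obtain ⟨x, hxP, rfl⟩ := hc hT
          exact ⟨x, hFmem x hxP⟩
        · rintro ⟨T, hT⟩
          obtain ⟨x, hxP, rfl⟩ := hc hT
          exact hPcompact.of_isClosed_subset (hFclosed x) inter_subset_left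
        · rintro ⟨T, hT⟩
          obtain ⟨x, hxP, rfl⟩ := hc hT
          exact hFclosed x
      obtain ⟨z, hz⟩ := hMne
      simp only [Set.mem_iInter] at hz
      obtain ⟨T₀, hT₀⟩ := hcne
      have hzP : z ∈ P := by
        obtain ⟨x, hxP, rfl⟩ := hc hT₀
        exact (hz ⟨_, hT₀⟩).1
      refine ⟨F z, ⟨z, hzP, rfl⟩, ?_⟩
      intro T hT
      obtain ⟨x, hxP, rfl⟩ := hc hT
      exact hFsub (hz ⟨_, hT⟩)
  obtain ⟨m, hm⟩ := zorn_superset 𝒮 hbound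
  obtain ⟨z₀, hz₀P, rfl⟩ := hm.1
  have hmax : ∀ x, x ∈ P → z₀ ∈ arc a0 x → x = z₀ := by
    intro x hxP hzx
    have hsub : F x ⊆ F z₀ := by
      intro y hy
      exact ⟨hy.1, arc_subset_left hy.2 hzx⟩
    have hsup := hm.2 ⟨x, hxP, rfl⟩ hsub
    have : z₀ ∈ F x := hsup (hFmem z₀ hz₀P)
    exact arc_antisymm hzx this.2
  -- the maximal point is a fixed point
  have hz₀Y : z₀ ∈ Y := hPY hz₀P
  by_cases hfix : f ⟨z₀, hz₀Y⟩ = z₀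
  · exact ⟨⟨z₀, hz₀Y⟩, hfix⟩
  exfalso
  set fz : X := f ⟨z₀, hz₀Y⟩ with hfzdef
  have hz₀arc : z₀ ∈ arc a0 fz := by
    obtain ⟨hx, harc⟩ := hz₀P
    exact harc
  obtain ⟨w, hwmem, hwY⟩ := h ⟨z₀, hz₀Y⟩ (arc z₀ fz) (arc_spec z₀ fz)
  have hw_arc : w ∈ arc z₀ fz := hwmem.1
  have hw_ne : w ≠ z₀ := by simpa using hwmem.2
  have hz₀w : z₀ ≠ w := hw_ne.symm
  have harcY : arc z₀ w ⊆ Y := arc_subset_preconn hYpre hz₀Y hwY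
  obtain ⟨δ, hδc, hδi, hδ0, hδ1, hδimg⟩ := arc_param hz₀w
  -- separate fz from z₀
  obtain ⟨V₀, V₁, hV₀, hV₁, hfzV₀, hzV₁, hVdisj⟩ := t2_separation (fun he => hfix he)
  set V : Set X := connectedComponentIn V₀ fz with hV
  have hVopen : IsOpen V := isOpen_ccIn hV₀ fz
  have hfzV : fz ∈ V := mem_connectedComponentIn hfzV₀
  have hVpre : IsPreconnected V := isPreconnected_connectedComponentIn
  -- the preimage of V under f corresponds to an open set O of X
  have hfV : IsOpen (f ⁻¹' V) := hVopen.preimage hf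
  rw [isOpen_induced_iff] at hfV
  obtain ⟨O, hOopen, hOeq⟩ := hfV
  have hz₀O : z₀ ∈ O := by
    have : (⟨z₀, hz₀Y⟩ : Y) ∈ f ⁻¹' V := hfzV
    rw [← hOeq] at this
    exact this
  -- choose z' on arc z₀ w, close to z₀
  have hz₀OV : z₀ ∈ O ∩ V₁ := ⟨hz₀O, hzV₁⟩
  have hδcw : ContinuousWithinAt δ (Icc 0 1) 0 := hδc 0 (by norm_num)
  have hOV : O ∩ V₁ ∈ nhds (δ 0) := by
    rw [hδ0]
    exact (hOopen.inter hV₁).mem_nhds hz₀OV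
  have hpre : δ ⁻¹' (O ∩ V₁) ∈ nhdsWithin 0 (Icc 0 1) := hδcw hOV
  rw [mem_nhdsWithin] at hpre
  obtain ⟨W, hWopen, h0W, hWsub⟩ := hpre
  obtain ⟨ε, hε, hball⟩ := Metric.isOpen_iff.mp hWopen 0 h0W
  set t : ℝ := min (ε/2) 1 with htdef
  have ht0 : 0 < t := lt_min (by linarith) (by norm_num)
  have ht1 : t ≤ 1 := min_le_right _ _
  have htI : t ∈ Icc (0:ℝ) 1 := ⟨ht0.le, ht1⟩
  have htW : t ∈ W := by
    apply hball
    rw [Real.ball_eq_Ioo]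
    constructor
    · linarith
    · calc t ≤ ε/2 := min_le_left _ _
        _ < 0 + ε := by linarith
  have htOV : δ t ∈ O ∩ V₁ := hWsub ⟨htW, htI⟩
  set z' : X := δ t with hz'def
  have hz'arc : z' ∈ arc z₀ w := by rw [← hδimg]; exact ⟨t, htI, rfl⟩
  have hz'Y : z' ∈ Y := harcY hz'arc
  have hz'z₀ : z' ≠ z₀ := by
    intro he
    rw [← hδ0] at he
    have := hδi htI (by norm_num) he
    exact (ne_of_gt ht0) this
  have hz'V₁ : z' ∈ V₁ := htOV.2
  have hz'V : z' ∉ V := by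
    intro hmem
    exact (Set.disjoint_right.mp hVdisj hz'V₁) (connectedComponentIn_subset _ _ hmem)
  -- z' lies between a0 and fz
  have hz'zfz : z' ∈ arc z₀ fz := arc_subset_left hw_arc hz'arc
  have hz'a0fz : z' ∈ arc a0 fz := arc_subset_right hz₀arc hz'zfz
  -- z₀ < z'
  have hle : z₀ ∈ arc a0 z' := by
    have hsplit := arc_union_of_mem hz'a0fz
    have : z₀ ∈ arc a0 z' ∪ arc z' fz := by rw [hsplit]; exact hz₀arc
    rcases this with hh | hh
    · exact hh
    · exfalso
      have hinter := arc_inter_of_mem hz'zfz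
      have : z₀ ∈ arc z₀ z' ∩ arc z' fz := ⟨left_mem_arc _ _, hh⟩
      rw [hinter] at this
      simp only [mem_singleton_iff] at this
      exact hz'z₀ this.symm
  have hz'a0 : z' ≠ a0 := by
    intro he
    have : z₀ ∈ arc a0 a0 := he ▸ hle
    rw [arc_self] at this
    simp only [mem_singleton_iff] at this
    exact hz'z₀ (he.trans this.symm)
  have hz'fz : z' ≠ fz := by
    intro he
    rw [he] at hz'V
    exact hz'V hfzV
  have hcut : Cuts z' a0 fz := cuts_of_mem_arc hz'a0fz hz'a0 hz'fz
  -- z' belongs to P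
  have hfz'V : f ⟨z', hz'Y⟩ ∈ V := by
    have : (⟨z', hz'Y⟩ : Y) ∈ Subtype.val ⁻¹' O := htOV.1
    rw [hOeq] at this
    exact this
  have hz'P : z' ∈ P := by
    refine ⟨hz'Y, ?_⟩
    by_contra hz'arc'
    set T : Set X := arc a0 (f ⟨z', hz'Y⟩) ∪ V with hT
    have hTpre : IsPreconnected T :=
      IsPreconnected.union (f ⟨z', hz'Y⟩) (right_mem_arc _ _) hfz'V (arc_preconn _ _) hVpre
    have ha0T : a0 ∈ T := Or.inl (left_mem_arc _ _)
    have hfzT : fz ∈ T := Or.inr hfzV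
    have := hcut.2.2 T hTpre ha0T hfzT
    rcases this with hh | hh
    · exact hz'arc' hh
    · exact hz'V hh
  exact hz'z₀ (hmax z' hz'P hle)
end

section
/- Let f : [0,1] → [0,1] be continuous with topological entropy zero. Then every period of a periodic point of f is a power of 2. -/
open Set

namespace Stmt9X
variable {G : ℝ → ℝ}



lemma cover_pts (hG : Continuous G) {a b p q c d : ℝ}
    (hp : p ∈ Icc a b) (hq : q ∈ Icc a b) (h1 : G p ≤ c) (h2 : d ≤ G q) :
    Icc c d ⊆ G '' Icc a b := by
  intro y hy
  have h3 : y ∈ uIcc (G p) (G q) := by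
    rw [mem_uIcc]; exact Or.inl ⟨h1.trans hy.1, hy.2.trans h2⟩
  have h4 := intermediate_value_uIcc (hG.continuousOn (s := uIcc p q)) h3
  refine image_mono ?_ h4
  rw [uIcc, Icc_subset_Icc_iff (inf_le_sup)]
  exact ⟨le_inf hp.1 hq.1, sup_le hp.2 hq.2⟩

lemma cov_comp {A B C : Set ℝ} {m n : ℕ} (h1 : B ⊆ G^[m] '' A) (h2 : C ⊆ G^[n] '' B) :
    C ⊆ G^[m + n] '' A := by
  rw [add_comm, Function.iterate_add, image_comp]
  exact h2.trans (image_mono h1)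

lemma cov_self_pow {A : Set ℝ} (h : A ⊆ G '' A) : ∀ n, A ⊆ G^[n] '' A := by
  intro n
  induction n with
  | zero => simp
  | succ n ih =>
      have h1 : A ⊆ G^[1] '' A := by simpa using h
      exact cov_comp ih h1

/-- Core construction: from orbit data with a same-side pair on the right,
get two-sided turbulence for some iterate. -/
lemma core (hG : Continuous G) (P : Finset ℝ) {q : ℕ}
    {b c v : ℝ} (hbP : b ∈ P) (hvP : v ∈ P)
    (hbc : b < c) (hcv : c < v)
    (hGb : c ≤ G b) (hGc : G c ≤ b) (hGv : c ≤ G v)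
    (horb : ∀ z ∈ P, ∃ j, j < q ∧ G^[j] b = z) :
    ∃ s, 1 ≤ s ∧ ∃ A B, A < c ∧ c < B ∧
      Icc A B ⊆ G^[s] '' Icc A c ∧ Icc A B ⊆ G^[s] '' Icc c B := by
  have hPne : P.Nonempty := ⟨b, hbP⟩
  set A := P.min' hPne with hA
  set B := P.max' hPne with hB
  have hAb : A ≤ b := P.min'_le b hbP
  have hvB : v ≤ B := P.le_max' v hvP
  have hbGb : b ≤ G b := hbc.le.trans hGb
  have hbI : b ∈ Icc b (G b) := ⟨le_refl _, hbGb⟩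
  have hcI : c ∈ Icc b c := ⟨hbc.le, le_refl _⟩
  have hbI' : b ∈ Icc b c := ⟨le_refl _, hbc.le⟩
  -- step: Icc b (G b) ⊆ G '' Icc b c
  have hstep : Icc b (G b) ⊆ G '' Icc b c := cover_pts hG hcI hbI' hGc (le_refl _)
  -- self-covering of I := Icc b (G b)
  have hself : Icc b (G b) ⊆ G '' Icc b (G b) :=
    hstep.trans (image_mono (Icc_subset_Icc (le_refl _) hGb))
  have hgrow := cov_self_pow hself
  -- every orbit point lies in G^[q] '' Icc b (G b)
  have hPin : ∀ z ∈ P, z ∈ G^[q] '' Icc b (G b) := by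
    intro z hz
    obtain ⟨j, hj, rfl⟩ := horb z hz
    have hq1 : q = j + (q - j) := by omega
    rw [hq1, Function.iterate_add, image_comp]
    exact image_mono (hgrow (q - j)) (mem_image_of_mem _ hbI)
  have hconn : IsPreconnected (G^[q] '' Icc b (G b)) :=
    isPreconnected_Icc.image _ ((hG.iterate q).continuousOn)
  have hAB : Icc A B ⊆ G^[q] '' Icc b (G b) :=
    hconn.Icc_subset (hPin A (P.min'_mem hPne)) (hPin B (P.max'_mem hPne))
  refine ⟨1 + (1 + q), by omega, A, B, lt_of_le_of_lt hAb hbc, lt_of_lt_of_le hcv hvB, ?_, ?_⟩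
  · -- left piece: Icc A c ⇒₁ Icc b c ⇒₁ Icc b (G b) ⇒_q Icc A B
    have s1 : Icc b c ⊆ G^[1] '' Icc A c := by
      simpa using cover_pts hG (a := A) (b := c) ⟨hAb.trans hbc.le, le_refl _⟩
        ⟨hAb, hbc.le⟩ hGc hGb
    have s2 : Icc b (G b) ⊆ G^[1] '' Icc b c := by simpa using hstep
    exact cov_comp s1 (cov_comp s2 hAB)
  · have s1 : Icc b c ⊆ G^[1] '' Icc c B := by
      simpa using cover_pts hG (a := c) (b := B) ⟨le_refl _, hcv.le.trans hvB⟩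
        ⟨hcv.le, hvB⟩ hGc hGv
    have s2 : Icc b (G b) ⊆ G^[1] '' Icc b c := by simpa using hstep
    exact cov_comp s1 (cov_comp s2 hAB)

/-- From two-sided turbulence with possibly shared endpoint, get a strict
horseshoe for `G ∘ G`. -/
lemma turb_horseshoe (hG : Continuous G) {α ζ β : ℝ} (h1 : α < ζ) (h2 : ζ < β)
    (hJ : Icc α β ⊆ G '' Icc α ζ) (hK : Icc α β ⊆ G '' Icc ζ β) :
    ∃ x1 x2 y1 y2 : ℝ, α ≤ x1 ∧ x1 ≤ x2 ∧ x2 < y1 ∧ y1 ≤ y2 ∧ y2 ≤ β ∧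
      Icc α β ⊆ (G ∘ G) '' Icc x1 x2 ∧ Icc α β ⊆ (G ∘ G) '' Icc y1 y2 := by
  have hαβ : α ≤ β := h1.le.trans h2.le
  have hself : α ∈ Icc α β := ⟨le_refl _, hαβ⟩
  have hβm : β ∈ Icc α β := ⟨hαβ, le_refl _⟩
  -- preimages in J = Icc α ζ
  obtain ⟨p, hpJ, hGp⟩ : ∃ p ∈ Icc α ζ, G p = β := by
    obtain ⟨p, hp, hGp⟩ := hJ hβm; exact ⟨p, hp, hGp⟩
  obtain ⟨p', hp'J, hGp'⟩ : ∃ p ∈ Icc α ζ, G p = α := by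
    obtain ⟨p, hp, hGp⟩ := hJ hself; exact ⟨p, hp, hGp⟩
  -- preimages in K = Icc ζ β
  obtain ⟨k, hkK, hGk⟩ : ∃ k ∈ Icc ζ β, G k = α := by
    obtain ⟨k, hk, hGk⟩ := hK hself; exact ⟨k, hk, hGk⟩
  obtain ⟨k', hk'K, hGk'⟩ : ∃ k ∈ Icc ζ β, G k = β := by
    obtain ⟨k, hk, hGk⟩ := hK hβm; exact ⟨k, hk, hGk⟩
  have iter2 : ∀ {S T : Set ℝ}, T ⊆ G '' S → ∀ {W : Set ℝ}, W ⊆ G '' T → W ⊆ (G ∘ G) '' S := by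
    intro S T h W h'
    rw [image_comp]
    exact h'.trans (image_mono h)
  by_cases hζa : G ζ = α
  · -- G ζ = α. p ≠ ζ.
    have hpζ : p < ζ := lt_of_le_of_ne hpJ.2 (fun h => by
      rw [h, hζa] at hGp; exact absurd hGp (ne_of_lt (h1.trans h2)))
    -- y₁ ∈ [p, ζ] with G y₁ = ζ
    obtain ⟨y₁, hy₁m, hGy₁⟩ : ∃ y ∈ Icc p ζ, G y = ζ := by
      have : ζ ∈ uIcc (G ζ) (G p) := by
        rw [hζa, hGp, mem_uIcc]; exact Or.inl ⟨h1.le, h2.le⟩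
      have h5 := intermediate_value_uIcc (hG.continuousOn (s := uIcc ζ p)) this
      obtain ⟨y, hy, hGy⟩ := h5
      rw [uIcc_comm, uIcc_of_le hpζ.le] at hy
      exact ⟨y, hy, hGy⟩
    have hy₁ζ : y₁ < ζ := lt_of_le_of_ne hy₁m.2 (fun h => by
      rw [h, hζa] at hGy₁; exact absurd hGy₁ (ne_of_lt h1))
    have hk'ζ : ζ < k' := lt_of_le_of_ne hk'K.1 (fun h => by
      rw [← h, hζa] at hGk'; exact absurd hGk' (ne_of_lt (h1.trans h2)))
    obtain ⟨y₂, hy₂m, hGy₂⟩ : ∃ y ∈ Icc ζ k', G y = ζ := by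
      have : ζ ∈ uIcc (G ζ) (G k') := by
        rw [hζa, hGk', mem_uIcc]; exact Or.inl ⟨h1.le, h2.le⟩
      have h5 := intermediate_value_uIcc (hG.continuousOn (s := uIcc ζ k')) this
      obtain ⟨y, hy, hGy⟩ := h5
      rw [uIcc_of_le hk'ζ.le] at hy
      exact ⟨y, hy, hGy⟩
    have hy₂ζ : ζ < y₂ := lt_of_le_of_ne hy₂m.1 (fun h => by
      rw [← h, hζa] at hGy₂; exact absurd hGy₂ (ne_of_lt h1))
    refine ⟨p, y₁, y₂, k', hpJ.1, hy₁m.1, hy₁ζ.trans hy₂ζ, hy₂m.2, hk'K.2, ?_, ?_⟩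
    · refine iter2 ?_ hK
      exact cover_pts hG (a := p) (b := y₁) ⟨hy₁m.1, le_refl _⟩ ⟨le_refl _, hy₁m.1⟩
        (le_of_eq hGy₁) (le_of_eq hGp.symm)
    · refine iter2 ?_ hK
      exact cover_pts hG (a := y₂) (b := k') ⟨le_refl _, hy₂m.2⟩ ⟨hy₂m.2, le_refl _⟩
        (le_of_eq hGy₂) (le_of_eq hGk'.symm)
  · by_cases hζb : G ζ = β
    · -- G ζ = β, mirror case
      have hp'ζ : p' < ζ := lt_of_le_of_ne hp'J.2 (fun h => by
        rw [h, hζb] at hGp'; exact absurd hGp'.symm (ne_of_lt (h1.trans h2)))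
      obtain ⟨y₁, hy₁m, hGy₁⟩ : ∃ y ∈ Icc p' ζ, G y = ζ := by
        have : ζ ∈ uIcc (G p') (G ζ) := by
          rw [hζb, hGp', mem_uIcc]; exact Or.inl ⟨h1.le, h2.le⟩
        have h5 := intermediate_value_uIcc (hG.continuousOn (s := uIcc p' ζ)) this
        obtain ⟨y, hy, hGy⟩ := h5
        rw [uIcc_of_le hp'ζ.le] at hy
        exact ⟨y, hy, hGy⟩
      have hy₁ζ : y₁ < ζ := lt_of_le_of_ne hy₁m.2 (fun h => by
        rw [h, hζb] at hGy₁; exact absurd hGy₁ (ne_of_gt h2))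
      have hkζ : ζ < k := lt_of_le_of_ne hkK.1 (fun h => by
        rw [← h, hζb] at hGk; exact absurd hGk.symm (ne_of_lt (h1.trans h2)))
      obtain ⟨y₂, hy₂m, hGy₂⟩ : ∃ y ∈ Icc ζ k, G y = ζ := by
        have : ζ ∈ uIcc (G k) (G ζ) := by
          rw [hζb, hGk, mem_uIcc]; exact Or.inl ⟨h1.le, h2.le⟩
        have h5 := intermediate_value_uIcc (hG.continuousOn (s := uIcc k ζ)) this
        obtain ⟨y, hy, hGy⟩ := h5
        rw [uIcc_comm, uIcc_of_le hkζ.le] at hy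
        exact ⟨y, hy, hGy⟩
      have hy₂ζ : ζ < y₂ := lt_of_le_of_ne hy₂m.1 (fun h => by
        rw [← h, hζb] at hGy₂; exact absurd hGy₂ (ne_of_gt h2))
      refine ⟨p', y₁, y₂, k, hp'J.1, hy₁m.1, hy₁ζ.trans hy₂ζ, hy₂m.2, hkK.2, ?_, ?_⟩
      · refine iter2 ?_ hJ
        exact cover_pts hG (a := p') (b := y₁) ⟨le_refl _, hy₁m.1⟩ ⟨hy₁m.1, le_refl _⟩
          (le_of_eq hGp') (le_of_eq hGy₁.symm)
      · refine iter2 ?_ hJ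
        exact cover_pts hG (a := y₂) (b := k) ⟨hy₂m.2, le_refl _⟩ ⟨le_refl _, hy₂m.2⟩
          (le_of_eq hGk) (le_of_eq hGy₂.symm)
    · -- G ζ ∉ {α, β}
      have hpζ : p < ζ := lt_of_le_of_ne hpJ.2 (fun h => hζb (by rw [← h]; exact hGp))
      have hp'ζ : p' < ζ := lt_of_le_of_ne hp'J.2 (fun h => hζa (by rw [← h]; exact hGp'))
      have hkζ : ζ < k := lt_of_le_of_ne hkK.1 (fun h => hζa (by rw [h]; exact hGk))
      have hk'ζ : ζ < k' := lt_of_le_of_ne hk'K.1 (fun h => hζb (by rw [h]; exact hGk'))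
      refine ⟨min p p', max p p', min k k', max k k', le_min hpJ.1 hp'J.1, min_le_max,
        lt_of_le_of_lt (max_le hpζ.le hp'ζ.le) (lt_min hkζ hk'ζ), min_le_max,
        max_le hkK.2 hk'K.2, ?_, ?_⟩
      · have hX : Icc α β ⊆ G '' Icc (min p p') (max p p') :=
          cover_pts hG ⟨min_le_right _ _, le_max_right _ _⟩ ⟨min_le_left _ _ , le_max_left _ _⟩
            (le_of_eq hGp') (le_of_eq hGp.symm)
        exact iter2 ((Icc_subset_Icc_right h2.le).trans hX) hJ
      · have hY : Icc α β ⊆ G '' Icc (min k k') (max k k') :=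
          cover_pts hG ⟨min_le_left _ _, le_max_left _ _⟩ ⟨min_le_right _ _ , le_max_right _ _⟩
            (le_of_eq hGk) (le_of_eq hGk'.symm)
        exact iter2 ((Icc_subset_Icc_right h2.le).trans hY) hJ

lemma iter_neg (G : ℝ → ℝ) : ∀ (j : ℕ) (y : ℝ), (fun y => -G (-y))^[j] y = -(G^[j] (-y)) := by
  intro j
  induction j with
  | zero => intro y; simp
  | succ j ih =>
      intro y
      rw [Function.iterate_succ_apply, Function.iterate_succ_apply, ih]
      norm_num

theorem odd_horseshoe (hG : Continuous G) {x₀ : ℝ} {q : ℕ} (hq3 : 3 ≤ q) (hodd : Odd q)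
    (hmin : Function.minimalPeriod G x₀ = q)
    (core : ∀ (G : ℝ → ℝ), Continuous G → ∀ (P : Finset ℝ) (q : ℕ),
      ∀ b c v : ℝ, b ∈ P → v ∈ P → b < c → c < v → c ≤ G b → G c ≤ b → c ≤ G v →
      (∀ z ∈ P, ∃ j, j < q ∧ G^[j] b = z) →
      ∃ s, 1 ≤ s ∧ ∃ A B, A < c ∧ c < B ∧
        Icc A B ⊆ G^[s] '' Icc A c ∧ Icc A B ⊆ G^[s] '' Icc c B) :
    ∃ s, 1 ≤ s ∧ ∃ A z B, A < z ∧ z < B ∧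
      Icc A B ⊆ G^[s] '' Icc A z ∧ Icc A B ⊆ G^[s] '' Icc z B := by
  classical
  have hq0 : 0 < q := by omega
  have hper : Function.IsPeriodicPt G q x₀ := hmin ▸ Function.isPeriodicPt_minimalPeriod G x₀
  have hx₀p : x₀ ∈ Function.periodicPts G := ⟨q, hq0, hper⟩
  set P : Finset ℝ := (Finset.range q).image (fun j => G^[j] x₀) with hP
  have hmem : ∀ z, z ∈ P ↔ ∃ j, j < q ∧ G^[j] x₀ = z := by
    intro z
    simp only [hP, Finset.mem_image, Finset.mem_range]
  have hx₀P : x₀ ∈ P := (hmem x₀).2 ⟨0, hq0, rfl⟩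
  have hminP : ∀ z ∈ P, Function.minimalPeriod G z = q := by
    intro z hz; obtain ⟨j, hj, rfl⟩ := (hmem z).1 hz
    rw [Function.minimalPeriod_apply_iterate hx₀p, hmin]
  have hzper : ∀ z ∈ P, z ∈ Function.periodicPts G := by
    intro z hz
    rw [← Function.minimalPeriod_pos_iff_mem_periodicPts, hminP z hz]; omega
  have hperP : ∀ z ∈ P, Function.IsPeriodicPt G q z := by
    intro z hz; rw [← hminP z hz]; exact Function.isPeriodicPt_minimalPeriod G z
  have hGP : ∀ z ∈ P, G z ∈ P := by
    intro z hz; obtain ⟨j, hj, rfl⟩ := (hmem z).1 hz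
    rcases eq_or_lt_of_le (Nat.succ_le_of_lt hj) with h | h
    · refine (hmem _).2 ⟨0, hq0, ?_⟩
      rw [Function.iterate_zero_apply, ← Function.iterate_succ_apply' G j x₀, h]
      exact hper.symm
    · exact (hmem _).2 ⟨j + 1, h, (Function.iterate_succ_apply' G j x₀)⟩
  have hne : ∀ z ∈ P, G z ≠ z := by
    intro z hz h
    have h1 : Function.IsPeriodicPt G 1 z := by
      simpa [Function.IsPeriodicPt, Function.IsFixedPt] using h
    have := h1.minimalPeriod_le one_pos
    rw [hminP z hz] at this
    omega
  -- enumeration of P as orbit of any of its points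
  have hEnum : ∀ p ∈ P, ∀ z ∈ P, ∃ j, j < q ∧ G^[j] p = z := by
    intro p hp z hz
    set Q : Finset ℝ := (Finset.range q).image (fun j => G^[j] p) with hQ
    have hQP : Q ⊆ P := by
      intro w hw
      simp only [hQ, Finset.mem_image, Finset.mem_range] at hw
      obtain ⟨j, hj, rfl⟩ := hw
      obtain ⟨i, hi, rfl⟩ := (hmem p).1 hp
      rw [← Function.iterate_add_apply]
      rcases Nat.lt_or_ge (j + i) q with h | h
      · exact (hmem _).2 ⟨j + i, h, rfl⟩
      · refine (hmem _).2 ⟨j + i - q, by omega, ?_⟩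
        have hq' : G^[q] x₀ = x₀ := hper
        set l := j + i - q with hl
        have hli : j + i = l + q := by omega
        rw [hli, Function.iterate_add_apply, hq']
    have hinj : ∀ j₁ ∈ Finset.range q, ∀ j₂ ∈ Finset.range q,
        G^[j₁] p = G^[j₂] p → j₁ = j₂ := by
      intro j₁ h₁ j₂ h₂ hh
      rw [Finset.mem_range] at h₁ h₂
      have l1 : j₁ ≤ j₂ := Function.le_of_lt_minimalPeriod_of_iterate_eq
        (by rw [hminP p hp]; exact h₁) hh
      have l2 : j₂ ≤ j₁ := Function.le_of_lt_minimalPeriod_of_iterate_eq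
        (by rw [hminP p hp]; exact h₂) hh.symm
      omega
    have hQcard : Q.card = q := by
      rw [hQ, Finset.card_image_of_injOn hinj, Finset.card_range]
    have hPcard : P.card ≤ q := by
      rw [hP]
      exact le_trans (Finset.card_image_le) (by rw [Finset.card_range])
    have hQP' : Q = P := Finset.eq_of_subset_of_card_le hQP (le_trans hPcard hQcard.ge)
    have : z ∈ Q := hQP' ▸ hz
    simp only [hQ, Finset.mem_image, Finset.mem_range] at this
    obtain ⟨j, hj, hjz⟩ := this
    exact ⟨j, hj, hjz⟩
  have hPcard : P.card = q := by
    rw [hP, Finset.card_image_of_injOn, Finset.card_range]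
    intro j₁ h₁ j₂ h₂ hh
    simp only [Finset.coe_range, Set.mem_Iio] at h₁ h₂
    have l1 : j₁ ≤ j₂ := Function.le_of_lt_minimalPeriod_of_iterate_eq (hmin ▸ h₁) hh
    have l2 : j₂ ≤ j₁ := Function.le_of_lt_minimalPeriod_of_iterate_eq (hmin ▸ h₂) hh.symm
    omega
  -- injectivity of G on P
  have hinjG : ∀ z₁ ∈ P, ∀ z₂ ∈ P, G z₁ = G z₂ → z₁ = z₂ := by
    intro z₁ h₁ z₂ h₂ hh
    have e : ∀ z ∈ P, G^[q - 1] (G z) = z := by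
      intro z hz
      have h1 : G^[q] z = z := hperP z hz
      have h2 : q - 1 + 1 = q := by omega
      rw [← h2, Function.iterate_succ_apply] at h1
      exact h1
    rw [← e z₁ h₁, ← e z₂ h₂, hh]
  -- the switch pair b < c
  have hPne : P.Nonempty := ⟨x₀, hx₀P⟩
  set A₀ := P.min' hPne with hA₀
  set B₀ := P.max' hPne with hB₀
  have hup : A₀ ∈ P.filter (fun z => z < G z) := by
    rw [Finset.mem_filter]
    refine ⟨P.min'_mem hPne, ?_⟩
    exact lt_of_le_of_ne (P.min'_le _ (hGP A₀ (P.min'_mem hPne)))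
      (fun h => hne A₀ (P.min'_mem hPne) h.symm)
  set b := (P.filter (fun z => z < G z)).max' ⟨A₀, hup⟩ with hb
  have hbmem : b ∈ P.filter (fun z => z < G z) :=
    Finset.max'_mem (P.filter (fun z => z < G z)) ⟨A₀, hup⟩
  rw [Finset.mem_filter] at hbmem
  obtain ⟨hbP, hbGb⟩ := hbmem
  have hdown : B₀ ∈ P.filter (fun z => b < z) := by
    rw [Finset.mem_filter]
    refine ⟨P.max'_mem hPne, ?_⟩
    have h1 : G B₀ < B₀ := lt_of_le_of_ne (P.le_max' _ (hGP B₀ (P.max'_mem hPne)))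
      (hne B₀ (P.max'_mem hPne))
    have h2 : b ≠ B₀ := by
      intro h; rw [h] at hbGb; exact absurd hbGb (not_lt.2 h1.le)
    exact lt_of_le_of_ne (P.le_max' b hbP) h2
  set c := (P.filter (fun z => b < z)).min' ⟨B₀, hdown⟩ with hc
  have hcmem : c ∈ P.filter (fun z => b < z) :=
    Finset.min'_mem (P.filter (fun z => b < z)) ⟨B₀, hdown⟩
  rw [Finset.mem_filter] at hcmem
  obtain ⟨hcP, hbc⟩ := hcmem
  have hcGb : c ≤ G b := by
    refine Finset.min'_le _ _ ?_
    rw [Finset.mem_filter]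
    exact ⟨hGP b hbP, hbGb⟩
  have hGcb : G c ≤ b := by
    have h1 : ¬ (c < G c) := by
      intro h
      have : c ∈ P.filter (fun z => z < G z) := by rw [Finset.mem_filter]; exact ⟨hcP, h⟩
      exact absurd (Finset.le_max' _ _ this) (not_le.2 hbc)
    have h2 : G c < c := lt_of_le_of_ne (not_lt.1 h1) (hne c hcP)
    by_contra h3
    have : G c ∈ P.filter (fun z => b < z) := by
      rw [Finset.mem_filter]; exact ⟨hGP c hcP, not_le.1 h3⟩
    exact absurd (Finset.min'_le _ _ this) (not_le.2 h2)
  -- case analysis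
  by_cases hcase : ∃ v ∈ P, b < v ∧ b < G v
  · obtain ⟨v, hvP, hbv, hbGv⟩ := hcase
    have hcv' : c ≤ v := Finset.min'_le _ _ (by rw [Finset.mem_filter]; exact ⟨hvP, hbv⟩)
    have hcGv : c ≤ G v := Finset.min'_le _ _ (by rw [Finset.mem_filter]; exact ⟨hGP v hvP, hbGv⟩)
    have hvc : c < v := by
      rcases eq_or_lt_of_le hcv' with h | h
      · exfalso; rw [← h] at hbGv; exact absurd hbGv (not_lt.2 hGcb)
      · exact h
    obtain ⟨s, hs, A, B, h1, h2, h3, h4⟩ :=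
      core G hG P q b c v hbP hvP hbc hvc hcGb hGcb hcGv (hEnum b hbP)
    exact ⟨s, hs, A, c, B, h1, h2, h3, h4⟩
  · by_cases hcase1 : ∃ u ∈ P, u ≤ b ∧ G u ≤ b
    · -- reflection
      obtain ⟨u, huP, hub, hGub⟩ := hcase1
      have hub' : u < b := by
        rcases eq_or_lt_of_le hub with h | h
        · exfalso; rw [h] at hGub; exact absurd hGub (not_le.2 hbGb)
        · exact h
      set G' : ℝ → ℝ := fun y => -G (-y) with hG'
      have hG'c : Continuous G' := (hG.comp continuous_neg).neg
      set P' : Finset ℝ := P.image (fun z => -z) with hP'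
      have hmem' : ∀ z ∈ P, -z ∈ P' := fun z hz => Finset.mem_image_of_mem _ hz
      have horb' : ∀ z' ∈ P', ∃ j, j < q ∧ G'^[j] (-c) = z' := by
        intro z' hz'
        rw [hP', Finset.mem_image] at hz'
        obtain ⟨z, hz, rfl⟩ := hz'
        obtain ⟨j, hj, hjz⟩ := hEnum c hcP z hz
        refine ⟨j, hj, ?_⟩
        rw [hG', iter_neg, neg_neg, hjz]
      obtain ⟨s, hs, A', B', h1, h2, h3, h4⟩ :=
        core G' hG'c P' q (-c) (-b) (-u) (hmem' c hcP) (hmem' u huP)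
          (neg_lt_neg hbc) (neg_lt_neg hub')
          (by rw [hG']; simpa using neg_le_neg hGcb)
          (by rw [hG']; simpa using neg_le_neg hcGb)
          (by rw [hG']; simpa using neg_le_neg hGub)
          horb'
      refine ⟨s, hs, -B', b, -A', by linarith, by linarith, ?_, ?_⟩
      · intro y hy
        have : -y ∈ Icc A' B' := ⟨by linarith [hy.2], by linarith [hy.1]⟩
        obtain ⟨w, hw, hww⟩ := h4 this
        rw [hG', iter_neg] at hww
        refine ⟨-w, ⟨by linarith [hw.2], by linarith [hw.1]⟩, ?_⟩
        have := congrArg Neg.neg hww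
        rw [neg_neg] at this
        rw [this, neg_neg]
      · intro y hy
        have : -y ∈ Icc A' B' := ⟨by linarith [hy.2], by linarith [hy.1]⟩
        obtain ⟨w, hw, hww⟩ := h3 this
        rw [hG', iter_neg] at hww
        refine ⟨-w, ⟨by linarith [hw.2], by linarith [hw.1]⟩, ?_⟩
        have := congrArg Neg.neg hww
        rw [neg_neg] at this
        rw [this, neg_neg]
    · -- parity contradiction
      exfalso
      push_neg at hcase hcase1
      have hLR := Finset.card_filter_add_card_filter_not
        (p := fun z => z ≤ b) (s := P)
      set Lf := P.filter (fun z => z ≤ b) with hLf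
      set Rf := P.filter (fun z => ¬ z ≤ b) with hRf
      have c1 : Lf.card ≤ Rf.card := by
        apply Finset.card_le_card_of_injOn (fun z => G z)
        · intro z hz
          rw [hLf, Finset.mem_coe, Finset.mem_filter] at hz
          rw [hRf, Finset.mem_coe, Finset.mem_filter]
          exact ⟨hGP z hz.1, not_le.2 (hcase1 z hz.1 hz.2)⟩
        · intro z₁ h₁ z₂ h₂ hh
          rw [Finset.mem_coe, Finset.mem_filter] at h₁ h₂
          exact hinjG z₁ h₁.1 z₂ h₂.1 hh
      have c2 : Rf.card ≤ Lf.card := by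
        apply Finset.card_le_card_of_injOn (fun z => G z)
        · intro z hz
          rw [hRf, Finset.mem_coe, Finset.mem_filter] at hz
          rw [hLf, Finset.mem_coe, Finset.mem_filter]
          exact ⟨hGP z hz.1, hcase z hz.1 (not_le.1 hz.2)⟩
        · intro z₁ h₁ z₂ h₂ hh
          rw [Finset.mem_coe, Finset.mem_filter] at h₁ h₂
          exact hinjG z₁ h₁.1 z₂ h₂.1 hh
      have heq : Lf.card = Rf.card := le_antisymm c1 c2
      rw [hPcard] at hLR
      rw [Nat.odd_iff] at hodd
      omega



lemma lift_iter (f : unitInterval → unitInterval) :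
    ∀ (t : ℕ) (z : ℝ) (hz : z ∈ Icc (0:ℝ) 1),
      (fun y : ℝ => ((f (projIcc (0:ℝ) 1 zero_le_one y) : unitInterval) : ℝ))^[t] z
        = ((f^[t] ⟨z, hz⟩ : unitInterval) : ℝ) := by
  intro t
  induction t with
  | zero => intro z hz; simp
  | succ t ih =>
      intro z hz
      rw [Function.iterate_succ_apply, Function.iterate_succ_apply]
      have h1 : projIcc (0:ℝ) 1 zero_le_one z = ⟨z, hz⟩ := projIcc_of_mem zero_le_one hz
      simp only [h1]
      rw [ih _ (f ⟨z, hz⟩).2]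

lemma itinerary {H : ℝ → ℝ} (J : Bool → Set ℝ)
    (hcov : ∀ i j : Bool, J j ⊆ H '' J i) (hne : ∀ i, (J i).Nonempty) :
    ∀ (n : ℕ) (w : ℕ → Bool), ∃ z, z ∈ J (w 0) ∧ ∀ i, i < n → H^[i] z ∈ J (w i) := by
  intro n
  induction n with
  | zero => intro w; obtain ⟨z, hz⟩ := hne (w 0); exact ⟨z, hz, by omega⟩
  | succ n ih =>
      intro w
      obtain ⟨z', hz'0, hz'⟩ := ih (fun i => w (i + 1))
      obtain ⟨z, hz, hHz⟩ := hcov (w 0) (w 1) hz'0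
      refine ⟨z, hz, ?_⟩
      intro i hi
      match i with
      | 0 => simpa using hz
      | (i + 1) =>
          rw [Function.iterate_succ_apply, hHz]
          exact hz' i (by omega)


end Stmt9X

open scoped ENNReal in
open Set Dynamics Stmt9X in
/-- A zero entropy continuous interval map has only periods that are powers of two. -/
theorem stmt9 (f : unitInterval → unitInterval) (hf : Continuous f)
    (h : Dynamics.coverEntropy f Set.univ = 0)
    (x : unitInterval) (hx : x ∈ Function.periodicPts f) :
    ∃ k : ℕ, Function.minimalPeriod f x = 2 ^ k := by
  classical
  by_contra hcon
  push_neg at hcon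
  set n := Function.minimalPeriod f x with hn
  have hn0 : 0 < n := Function.minimalPeriod_pos_of_mem_periodicPts hx
  set k := n.factorization 2 with hk
  set q := n / 2 ^ k with hq
  clear_value q k n
  have hdvd : 2 ^ k ∣ n := by rw [hk]; exact Nat.ordProj_dvd n 2
  have hnq : n = 2 ^ k * q := by rw [hq]; exact (Nat.mul_div_cancel' hdvd).symm
  have hq2 : ¬ 2 ∣ q := by
    rw [hq, hk]; exact Nat.not_dvd_ordCompl Nat.prime_two (by omega)
  have hq1 : q ≠ 1 := fun hh => hcon k (by rw [hnq, hh, mul_one])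
  have hq0 : q ≠ 0 := by intro hh; rw [hnq, hh, mul_zero] at hn0; omega
  have hq3 : 3 ≤ q := by
    have h2 : q % 2 ≠ 0 := fun hh => hq2 (Nat.dvd_of_mod_eq_zero hh)
    omega
  have hodd : Odd q := Nat.odd_iff.2 (by
    have h2 : q % 2 ≠ 0 := fun hh => hq2 (Nat.dvd_of_mod_eq_zero hh)
    omega)
  have h2k0 : (0:ℕ) < 2 ^ k := Nat.pow_pos (by norm_num)
  -- the iterate g
  set g := f^[2 ^ k] with hg
  have hgmin : Function.minimalPeriod g x = q := by
    rw [hg, Function.minimalPeriod_iterate_eq_div_gcd (by omega : (2:ℕ) ^ k ≠ 0), ← hn,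
      Nat.gcd_eq_right hdvd, ← hq]
  have hqpos : 0 < q := by omega
  have hgq : g^[q] x = x := by
    rw [← hgmin]; exact Function.iterate_minimalPeriod
  -- lift g to the real line
  have hΦit := lift_iter g
  set Φ : ℝ → ℝ := fun y => ((g (projIcc (0:ℝ) 1 zero_le_one y) : unitInterval) : ℝ) with hΦ
  have hgc : Continuous g := hf.iterate _
  have hΦc : Continuous Φ := continuous_subtype_val.comp (hgc.comp continuous_projIcc)
  have hx01 : (x : ℝ) ∈ Icc (0:ℝ) 1 := x.2
  have hΦper : Function.IsPeriodicPt Φ q (x:ℝ) := by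
    show Φ^[q] (x:ℝ) = (x:ℝ)
    rw [hΦit q _ hx01]
    simp only [Subtype.coe_eta]
    rw [hgq]
  have hΦmin : Function.minimalPeriod Φ (x:ℝ) = q := by
    have hd : Function.minimalPeriod Φ (x:ℝ) ∣ q := hΦper.minimalPeriod_dvd
    have hpos : 0 < Function.minimalPeriod Φ (x:ℝ) :=
      Function.minimalPeriod_pos_of_mem_periodicPts ⟨q, hqpos, hΦper⟩
    by_contra hnem
    have hlt : Function.minimalPeriod Φ (x:ℝ) < q :=
      lt_of_le_of_ne (Nat.le_of_dvd hqpos hd) hnem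
    set m := Function.minimalPeriod Φ (x:ℝ) with hm
    have hmx : Φ^[m] (x:ℝ) = (x:ℝ) := Function.iterate_minimalPeriod
    rw [hΦit m _ hx01] at hmx
    simp only [Subtype.coe_eta] at hmx
    have hgm : Function.IsPeriodicPt g m x := Subtype.coe_injective hmx
    have hle := hgm.minimalPeriod_le hpos
    rw [hgmin] at hle
    omega
  -- odd-period horseshoe
  obtain ⟨s, hs1, A, z, B, hAz, hzB, hcovL, hcovR⟩ :=
    odd_horseshoe hΦc hq3 hodd hΦmin
      (fun G hG P q b c v hb hv h1 h2 h3 h4 h5 h6 => core hG P hb hv h1 h2 h3 h4 h5 h6)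
  obtain ⟨x1, x2, y1, y2, hAx1, hx12, hx2y1, hy12, hy2B, hcX, hcY⟩ :=
    turb_horseshoe (hΦc.iterate s) hAz hzB hcovL hcovR
  -- letters of the horseshoe
  set H : ℝ → ℝ := Φ^[2 * s] with hH
  have hHeq : ∀ S : Set ℝ, (Φ^[s] ∘ Φ^[s]) '' S = H '' S := by
    intro S; rw [hH, two_mul, Function.iterate_add]
  set J : Bool → Set ℝ := fun i => if i then Icc y1 y2 else Icc x1 x2 with hJ
  have hAB01 : Icc A B ⊆ Icc (0:ℝ) 1 := by
    intro u hu
    obtain ⟨w, _, hw⟩ := hcovL hu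
    rw [show s = (s - 1) + 1 by omega, Function.iterate_succ_apply'] at hw
    rw [← hw, hΦ]
    exact (g _).2
  have hJAB : ∀ i, J i ⊆ Icc A B := by
    intro i
    rw [hJ]
    cases i
    · simpa using Icc_subset_Icc hAx1 (by linarith)
    · simpa using Icc_subset_Icc (by linarith) hy2B
  have hJcov : ∀ i j : Bool, J j ⊆ H '' J i := by
    intro i j
    refine (hJAB j).trans ?_
    cases i
    · rw [hJ]; simpa [← hHeq] using hcX
    · rw [hJ]; simpa [← hHeq] using hcY
  have hJne : ∀ i, (J i).Nonempty := by
    intro i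
    rw [hJ]
    cases i
    · simpa using nonempty_Icc.2 hx12
    · simpa using nonempty_Icc.2 hy12
  -- entropy data
  set δ := y1 - x2 with hδ
  have hδ0 : 0 < δ := by rw [hδ]; linarith
  set U : Set (unitInterval × unitInterval) := {p | dist p.1 p.2 < δ / 2} with hUdef
  have hUuni : U ∈ uniformity unitInterval := Metric.dist_mem_uniformity (by linarith)
  set M := 2 ^ k * (2 * s) with hM
  have hM1 : 1 ≤ M := by
    rw [hM]
    have : 1 ≤ 2 * s := by omega
    exact Nat.one_le_iff_ne_zero.2 (Nat.mul_ne_zero (by omega) (by omega))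
  -- large dynamical nets
  have hnet : ∀ m : ℕ, ((2 ^ m : ℕ) : ℕ∞) ≤ netMaxcard f Set.univ U (M * m) := by
    intro m
    have hitin := itinerary J hJcov hJne m
    set ext : (Fin m → Bool) → ℕ → Bool :=
      fun w i => if hi : i < m then w ⟨i, hi⟩ else false with hext
    choose zf hz1 hz2 using fun w : Fin m → Bool => hitin (ext w)
    have hz01 : ∀ w, zf w ∈ Icc (0:ℝ) 1 := fun w => hAB01 (hJAB _ (hz1 w))
    set pt : (Fin m → Bool) → unitInterval := fun w => ⟨zf w, hz01 w⟩ with hpt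
    have horb : ∀ (w : Fin m → Bool) (i : ℕ), i < m →
        ((f^[M * i] (pt w) : unitInterval) : ℝ) = H^[i] (zf w) := by
      intro w i him
      have h1 : H^[i] (zf w) = Φ^[2 * s * i] (zf w) := by
        rw [hH, ← Function.iterate_mul]
      rw [h1, hΦit (2 * s * i) _ (hz01 w)]
      rw [hg, ← Function.iterate_mul]
      have h2 : 2 ^ k * (2 * s * i) = M * i := by rw [hM]; ring
      rw [h2]
    have hlet : ∀ (w : Fin m → Bool) (i : Fin m), H^[(i:ℕ)] (zf w) ∈ J (w i) := by
      intro w i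
      have := hz2 w i i.2
      have he : ext w (i:ℕ) = w i := by
        rw [hext]
        simp [i.2]
      rwa [he] at this
    have hsep : ∀ w w' : Fin m → Bool, w ≠ w' →
        Disjoint (UniformSpace.ball (pt w) (dynEntourage f U (M * m)))
          (UniformSpace.ball (pt w') (dynEntourage f U (M * m))) := by
      intro w w' hww
      obtain ⟨i, hi⟩ := Function.ne_iff.1 hww
      rw [Set.disjoint_left]
      intro t ht ht'
      have hiv : (i : ℕ) < m := i.2
      have hMi : M * (i : ℕ) < M * m := by
        exact Nat.mul_lt_mul_of_le_of_lt (le_refl M) hiv (by omega)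
      have e1 : (pt w, t) ∈ dynEntourage f U (M * m) := ht
      have e2 : (pt w', t) ∈ dynEntourage f U (M * m) := ht'
      rw [mem_dynEntourage] at e1 e2
      have d1 : dist (f^[M * i] (pt w)) (f^[M * i] t) < δ / 2 := e1 (M * i) hMi
      have d2 : dist (f^[M * i] (pt w')) (f^[M * i] t) < δ / 2 := e2 (M * i) hMi
      have dtri : dist (f^[M * i] (pt w)) (f^[M * i] (pt w')) < δ := by
        calc dist (f^[M * i] (pt w)) (f^[M * i] (pt w'))
            ≤ dist (f^[M * i] (pt w)) (f^[M * i] t)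
              + dist (f^[M * i] t) (f^[M * i] (pt w')) := dist_triangle _ _ _
          _ < δ / 2 + δ / 2 := by
              rw [dist_comm (f^[M * i] t)]
              exact add_lt_add d1 d2
          _ = δ := by ring
      have hv1 := hlet w i
      have hv2 := hlet w' i
      have hlower : δ ≤ dist (f^[M * i] (pt w)) (f^[M * i] (pt w')) := by
        rw [Subtype.dist_eq, horb w i hiv, horb w' i hiv, Real.dist_eq]
        have habs1 : H^[(i:ℕ)] (zf w) - H^[(i:ℕ)] (zf w')
            ≤ |H^[(i:ℕ)] (zf w) - H^[(i:ℕ)] (zf w')| := le_abs_self _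
        have habs2 : H^[(i:ℕ)] (zf w') - H^[(i:ℕ)] (zf w)
            ≤ |H^[(i:ℕ)] (zf w) - H^[(i:ℕ)] (zf w')| := by
          rw [abs_sub_comm]; exact le_abs_self _
        rcases Bool.eq_false_or_eq_true (w i) with hb | hb
        · have hb' : w' i = false := by
            cases hbw' : w' i
            · rfl
            · rw [hb, hbw'] at hi; exact absurd rfl hi
          rw [hb] at hv1; rw [hb'] at hv2
          rw [hJ] at hv1 hv2
          simp only [if_true, if_false, Bool.false_eq_true] at hv1 hv2
          have l1 : y1 ≤ H^[(i:ℕ)] (zf w) := hv1.1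
          have l2 : H^[(i:ℕ)] (zf w') ≤ x2 := hv2.2
          rw [hδ]; linarith
        · have hb' : w' i = true := by
            cases hbw' : w' i
            · rw [hb, hbw'] at hi; exact absurd rfl hi
            · rfl
          rw [hb] at hv1; rw [hb'] at hv2
          rw [hJ] at hv1 hv2
          simp only [if_true, if_false, Bool.false_eq_true] at hv1 hv2
          have l1 : H^[(i:ℕ)] (zf w) ≤ x2 := hv1.2
          have l2 : y1 ≤ H^[(i:ℕ)] (zf w') := hv2.1
          rw [hδ]; linarith
      linarith
    have hptinj : Function.Injective pt := by
      intro w w' hww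
      by_contra hne'
      have hd := hsep w w' hne'
      rw [hww] at hd
      have hball : pt w' ∈ UniformSpace.ball (pt w') (dynEntourage f U (M * m)) := by
        show (pt w', pt w') ∈ dynEntourage f U (M * m)
        rw [mem_dynEntourage]
        intro k' _
        show dist _ _ < δ / 2
        rw [dist_self]
        linarith
      exact Set.disjoint_left.1 hd hball hball
    set S : Finset unitInterval := Finset.image pt Finset.univ with hS
    have hcard : S.card = 2 ^ m := by
      rw [hS, Finset.card_image_of_injective _ hptinj, Finset.card_univ, Fintype.card_fun]
      simp
    have hdyn : IsDynNetIn f Set.univ U (M * m) S := by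
      constructor
      · exact fun _ _ => mem_univ _
      · intro a ha b hb hab
        rw [hS, Finset.coe_image] at ha hb
        obtain ⟨w, _, rfl⟩ := ha
        obtain ⟨w', _, rfl⟩ := hb
        exact hsep w w' (fun hh => hab (by rw [hh]))
    have hfin := hdyn.card_le_netMaxcard
    rw [hcard] at hfin
    exact_mod_cast hfin
  -- entropy lower bound
  have hlog2 : ENNReal.log 2 = ((Real.log 2 : ℝ) : EReal) := by
    rw [show (2:ℝ≥0∞) = ENNReal.ofReal 2 from (ENNReal.ofReal_ofNat 2).symm]
    rw [ENNReal.log_ofReal_of_pos (by norm_num)]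
  have hlow : ((Real.log 2 / M : ℝ) : EReal) ≤ netEntropyEntourage f Set.univ U := by
    rw [netEntropyEntourage]
    apply Filter.le_limsup_of_frequently_le'
    rw [Filter.frequently_atTop]
    intro a
    refine ⟨M * (a + 1), ?_, ?_⟩
    · calc a ≤ a + 1 := by omega
        _ ≤ M * (a + 1) := Nat.le_mul_of_pos_left _ (by omega)
    · set m := a + 1 with hm
      have hm0 : 0 < m := by omega
      have hlog : ((m : ℕ) : EReal) * ENNReal.log 2
          ≤ ENNReal.log (netMaxcard f Set.univ U (M * m)) := by
        rw [← ENNReal.log_pow]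
        apply ENNReal.log_monotone
        have h1 := hnet m
        have h2 : (((2 ^ m : ℕ) : ℕ∞) : ℝ≥0∞)
            ≤ ((netMaxcard f Set.univ U (M * m) : ℕ∞) : ℝ≥0∞) := ENat.toENNReal_le.2 h1
        calc (2:ℝ≥0∞) ^ m = (((2 ^ m : ℕ) : ℕ∞) : ℝ≥0∞) := by push_cast; norm_num
          _ ≤ _ := h2
      have hdiv := EReal.div_le_div_right_of_nonneg
        (c := ((M * m : ℕ) : EReal)) (Nat.cast_nonneg' _) hlog
      have hL : (((m : ℕ) : EReal) * ENNReal.log 2) / ((M * m : ℕ) : EReal)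
          = ((Real.log 2 / M : ℝ) : EReal) := by
        rw [hlog2, ← EReal.coe_coe_eq_natCast m, ← EReal.coe_coe_eq_natCast (M * m),
          ← EReal.coe_mul, div_eq_mul_inv, ← EReal.coe_inv, ← EReal.coe_mul,
          ← div_eq_mul_inv, EReal.coe_eq_coe_iff]
        rw [Nat.cast_mul, mul_comm ((M:ℕ):ℝ) ((m:ℕ):ℝ)]
        rw [mul_div_mul_left _ _ (by positivity : ((m:ℕ):ℝ) ≠ 0)]
      rw [hL] at hdiv
      exact hdiv
  have hupper := netEntropyEntourage_le_coverEntropy f Set.univ hUuni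
  rw [h] at hupper
  have hcontr : ((Real.log 2 / M : ℝ) : EReal) ≤ 0 := hlow.trans hupper
  have hposc : (0:EReal) < ((Real.log 2 / M : ℝ) : EReal) := by
    rw [EReal.coe_pos]
    apply div_pos (Real.log_pos one_lt_two)
    exact_mod_cast Nat.pos_of_ne_zero (by omega)
  exact absurd hcontr (not_le.2 hposc)
end
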